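/- arXiv:2509.24029 — 12 statements merged into one kernel-verified Lean document; each statement's English description precedes it below -/
import Mathlib

section
/- For every integer n ≥ 3 there exists exactly one configuration of n charges at equilibrium on the needle [0,1]; that is, there is a unique strictly increasing tuple x_1 < x_2 < ⋯ < x_n of real numbers with x_1 = 0 and x_n = 1 such that for every i with 2 ≤ i ≤ n−1, ∑_{j=1}^{i−1} 1/(x_i − x_j)² = ∑_{j=i+1}^{n} 1/(x_i − x_j)². -/
/-- For `n ≥ 3`, `x : Fin n → ℝ` is a configuration of `n` charges at equilibrium on the
needle `[0,1]`: a strictly increasing tuple with `x 0 = 0`, `x (n-1) = 1` such that each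
interior charge feels balanced forces. -/
def needleEquilibrium (n : ℕ) (x : Fin n → ℝ) : Prop :=
  StrictMono x ∧ (∀ i : Fin n, i.val = 0 → x i = 0) ∧
    (∀ i : Fin n, i.val = n - 1 → x i = 1) ∧
    ∀ i : Fin n, 1 ≤ i.val → i.val ≤ n - 2 →
      (∑ j ∈ Finset.univ.filter (fun j => j < i), 1 / (x i - x j) ^ 2) =
        ∑ j ∈ Finset.univ.filter (fun j => i < j), 1 / (x i - x j) ^ 2



def needleK (n : ℕ) (δ : ℝ) : Set (Fin n → ℝ) :=
  {x | (∀ i : Fin n, i.val = 0 → x i = 0) ∧ (∀ i : Fin n, i.val = n - 1 → x i = 1) ∧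
    ∀ i j : Fin n, i < j → δ ≤ x j - x i}

lemma isClosed_needleK (n : ℕ) (δ : ℝ) : IsClosed (needleK n δ) := by
  have h1 : IsClosed {x : Fin n → ℝ | ∀ i : Fin n, i.val = 0 → x i = 0} := by
    have : {x : Fin n → ℝ | ∀ i : Fin n, i.val = 0 → x i = 0}
        = ⋂ i : Fin n, {x | i.val = 0 → x i = 0} := by
      ext x; simp [Set.mem_iInter]
    rw [this]
    apply isClosed_iInter
    intro i
    by_cases h : i.val = 0
    · simp only [h, forall_const]
      exact isClosed_eq (continuous_apply i) continuous_const
    · simp only [h, false_implies]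
      simp
  have h2 : IsClosed {x : Fin n → ℝ | ∀ i : Fin n, i.val = n - 1 → x i = 1} := by
    have : {x : Fin n → ℝ | ∀ i : Fin n, i.val = n - 1 → x i = 1}
        = ⋂ i : Fin n, {x | i.val = n - 1 → x i = 1} := by
      ext x; simp [Set.mem_iInter]
    rw [this]
    apply isClosed_iInter
    intro i
    by_cases h : i.val = n - 1
    · simp only [h, forall_const]
      exact isClosed_eq (continuous_apply i) continuous_const
    · simp only [h, false_implies]
      simp
  have h3 : IsClosed {x : Fin n → ℝ | ∀ i j : Fin n, i < j → δ ≤ x j - x i} := by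
    have : {x : Fin n → ℝ | ∀ i j : Fin n, i < j → δ ≤ x j - x i}
        = ⋂ i : Fin n, ⋂ j : Fin n, {x | i < j → δ ≤ x j - x i} := by
      ext x; simp [Set.mem_iInter]
    rw [this]
    apply isClosed_iInter; intro i
    apply isClosed_iInter; intro j
    by_cases h : i < j
    · simp only [h, forall_const]
      exact isClosed_le continuous_const ((continuous_apply j).sub (continuous_apply i))
    · simp only [h, false_implies]
      simp
  exact h1.inter (h2.inter h3)

lemma isCompact_needleK (n : ℕ) (δ : ℝ) (hn : 3 ≤ n) (hδ : 0 < δ) :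
    IsCompact (needleK n δ) := by
  apply IsCompact.of_isClosed_subset (isCompact_Icc (a := (0 : Fin n → ℝ)) (b := 1))
    (isClosed_needleK n δ)
  intro x hx
  obtain ⟨h0, h1, hgap⟩ := hx
  rw [Set.mem_Icc]
  constructor <;> rw [Pi.le_def] <;> intro i
  · by_cases h : i.val = 0
    · simp [h0 i h]
    · have : (⟨0, by omega⟩ : Fin n) < i := by
        rw [Fin.lt_def]; simp; omega
      have := hgap _ i this
      have := h0 ⟨0, by omega⟩ rfl
      simp only [Pi.zero_apply]
      linarith
  · by_cases h : i.val = n - 1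
    · simp [h1 i h]
    · have hlt : i < (⟨n - 1, by omega⟩ : Fin n) := by
        rw [Fin.lt_def]; simp; omega
      have := hgap i _ hlt
      have := h1 ⟨n - 1, by omega⟩ rfl
      simp only [Pi.one_apply]
      linarith

noncomputable def needleE (n : ℕ) (x : Fin n → ℝ) : ℝ :=
  ∑ i : Fin n, ∑ j ∈ Finset.univ.filter (fun j => j < i), (x i - x j)⁻¹

lemma continuousOn_needleE (n : ℕ) (δ : ℝ) (hδ : 0 < δ) :
    ContinuousOn (needleE n) (needleK n δ) := by
  apply continuousOn_finset_sum
  intro i _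
  apply continuousOn_finset_sum
  intro j hj
  rw [Finset.mem_filter] at hj
  apply ContinuousOn.inv₀
  · exact ((continuous_apply i).continuousOn.sub (continuous_apply j).continuousOn)
  · intro x hx
    have := hx.2.2 j i hj.2
    intro hc
    rw [hc] at this
    linarith

lemma needleE_term_le (n : ℕ) (δ : ℝ) (hδ : 0 < δ) (x : Fin n → ℝ)
    (hx : x ∈ needleK n δ) (i j : Fin n) (hij : j < i) :
    (x i - x j)⁻¹ ≤ needleE n x := by
  have hpos : ∀ a b : Fin n, b < a → 0 < (x a - x b)⁻¹ := by
    intro a b hba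
    have h := hx.2.2 b a hba
    exact inv_pos.mpr (lt_of_lt_of_le hδ h)
  have h1 : (x i - x j)⁻¹ ≤ ∑ j' ∈ Finset.univ.filter (fun j' => j' < i), (x i - x j')⁻¹ :=
    Finset.single_le_sum (fun a ha => (hpos i a (Finset.mem_filter.mp ha).2).le)
      (Finset.mem_filter.mpr ⟨Finset.mem_univ _, hij⟩)
  rw [needleE]
  refine h1.trans (Finset.single_le_sum (f := fun i' => ∑ j' ∈ Finset.univ.filter (fun j' => j' < i'), (x i' - x j')⁻¹) (fun a _ => ?_) (Finset.mem_univ i))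
  exact Finset.sum_nonneg fun b hb => (hpos a b (Finset.mem_filter.mp hb).2).le

lemma needleE_hasDerivAt (n : ℕ) (x : Fin n → ℝ) (k : Fin n)
    (hx : ∀ j, j ≠ k → x j ≠ x k) :
    HasDerivAt (fun t => needleE n (Function.update x k t))
      (-(∑ j ∈ Finset.univ.filter (fun j => j < k), ((x k - x j) ^ 2)⁻¹)
        + ∑ j ∈ Finset.univ.filter (fun j => k < j), ((x j - x k) ^ 2)⁻¹) (x k) := by
  have main : HasDerivAt (fun t => needleE n (Function.update x k t))
      (∑ i : Fin n, if i = k then -(∑ j ∈ Finset.univ.filter (fun j => j < k), ((x k - x j) ^ 2)⁻¹)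
        else if k < i then ((x i - x k) ^ 2)⁻¹ else 0) (x k) := by
    apply HasDerivAt.fun_sum
    intro i _
    by_cases hik : i = k
    · subst hik
      simp only [if_pos rfl]
      have heq : (fun t => ∑ j ∈ Finset.univ.filter (fun j => j < i),
          (Function.update x i t i - Function.update x i t j)⁻¹)
          = fun t => ∑ j ∈ Finset.univ.filter (fun j => j < i), (t - x j)⁻¹ := by
        funext t
        apply Finset.sum_congr rfl
        intro j hj
        rw [Finset.mem_filter] at hj
        rw [Function.update_self, Function.update_of_ne (ne_of_lt hj.2)]
      rw [heq, ← Finset.sum_neg_distrib]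
      apply HasDerivAt.fun_sum
      intro j hj
      rw [Finset.mem_filter] at hj
      have hne : x i - x j ≠ 0 := sub_ne_zero.mpr (Ne.symm (hx j (ne_of_lt hj.2)))
      have h1 : HasDerivAt (fun t : ℝ => t - x j) 1 (x i) := (hasDerivAt_id (x i)).sub_const _
      have h2 := h1.fun_inv hne
      exact h2.congr_deriv (by ring)
    · simp only [if_neg hik]
      have heq : (fun t => ∑ j ∈ Finset.univ.filter (fun j => j < i),
          (Function.update x k t i - Function.update x k t j)⁻¹)
          = fun t => ∑ j ∈ Finset.univ.filter (fun j => j < i),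
              (x i - Function.update x k t j)⁻¹ := by
        funext t
        apply Finset.sum_congr rfl
        intro j hj
        rw [Function.update_of_ne hik]
      rw [heq]
      have hsum : (if k < i then ((x i - x k) ^ 2)⁻¹ else 0)
          = ∑ j ∈ Finset.univ.filter (fun j => j < i),
              (if j = k then ((x i - x k) ^ 2)⁻¹ else 0) := by
        rw [Finset.sum_ite_eq' (Finset.univ.filter (fun j => j < i)) k]
        simp [Finset.mem_filter]
      rw [hsum]
      apply HasDerivAt.fun_sum
      intro j hj
      rw [Finset.mem_filter] at hj
      by_cases hjk : j = k
      · subst hjk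
        simp only [if_pos rfl]
        have heq2 : (fun t => (x i - Function.update x j t j)⁻¹)
            = fun t : ℝ => (x i - t)⁻¹ := by
          funext t; rw [Function.update_self]
        rw [heq2]
        have hne : x i - x j ≠ 0 := sub_ne_zero.mpr (hx i hik)
        have h1 : HasDerivAt (fun t : ℝ => x i - t) (-1) (x j) := by
          simpa using ((hasDerivAt_id (x j)).const_sub (x i))
        have h2 := h1.fun_inv hne
        exact h2.congr_deriv (by norm_num)
      · simp only [if_neg hjk]
        have heq2 : (fun t => (x i - Function.update x k t j)⁻¹)
            = fun _ : ℝ => (x i - x j)⁻¹ := by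
          funext t; rw [Function.update_of_ne hjk]
        rw [heq2]
        exact hasDerivAt_const _ _
  convert main using 1
  rw [← Finset.sum_filter_add_sum_filter_not Finset.univ (fun i => i = k)]
  have e1 : Finset.univ.filter (fun i : Fin n => i = k) = {k} := by
    ext a; simp
  rw [e1, Finset.sum_singleton, if_pos rfl]
  congr 1
  have step1 : (∑ i ∈ Finset.univ.filter (fun i : Fin n => ¬ i = k),
      (if i = k then -(∑ j ∈ Finset.univ.filter (fun j => j < k), ((x k - x j) ^ 2)⁻¹)
        else if k < i then ((x i - x k) ^ 2)⁻¹ else 0))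
      = ∑ i ∈ Finset.univ.filter (fun i : Fin n => ¬ i = k),
          (if k < i then ((x i - x k) ^ 2)⁻¹ else 0) := by
    apply Finset.sum_congr rfl
    intro i hi
    rw [Finset.mem_filter] at hi
    rw [if_neg hi.2]
  rw [step1, ← Finset.sum_filter, Finset.filter_filter]
  apply Finset.sum_congr _ (fun _ _ => rfl)
  ext a
  simp only [Finset.mem_filter, Finset.mem_univ, true_and]
  exact ⟨fun h => ⟨ne_of_gt h, h⟩, fun h => h.2⟩

lemma needle_key (n : ℕ) (hn : 3 ≤ n) (x y : Fin n → ℝ)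
    (hx : needleEquilibrium n x) (hy : needleEquilibrium n y)
    (h : ∃ i, y i < x i) : False := by
  obtain ⟨w, hw⟩ := h
  obtain ⟨i, -, hi⟩ := Finset.exists_max_image Finset.univ (fun i => x i - y i)
    ⟨w, Finset.mem_univ w⟩
  have hd : 0 < x i - y i := lt_of_lt_of_le (by linarith) (hi w (Finset.mem_univ w))
  -- i is interior
  have hi0 : i.val ≠ 0 := by
    intro h0
    have := hx.2.1 i h0
    have := hy.2.1 i h0
    linarith
  have hiN : i.val ≠ n - 1 := by
    intro h0
    have := hx.2.2.1 i h0
    have := hy.2.2.1 i h0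
    linarith
  have h1 : 1 ≤ i.val := Nat.one_le_iff_ne_zero.mpr hi0
  have h2 : i.val ≤ n - 2 := by
    have := i.isLt; omega
  have hxe := hx.2.2.2 i h1 h2
  have hye := hy.2.2.2 i h1 h2
  set j0 : Fin n := ⟨0, by omega⟩ with hj0
  have hj0i : j0 < i := by
    rw [Fin.lt_def]; show 0 < i.val; omega
  -- left sums: strict
  have hL : (∑ j ∈ Finset.univ.filter (fun j => j < i), 1 / (x i - x j) ^ 2) <
      ∑ j ∈ Finset.univ.filter (fun j => j < i), 1 / (y i - y j) ^ 2 := by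
    apply Finset.sum_lt_sum
    · intro j hj
      rw [Finset.mem_filter] at hj
      have hji : j < i := hj.2
      have hyp : 0 < y i - y j := sub_pos.mpr (hy.1 hji)
      have hle : y i - y j ≤ x i - x j := by
        have := hi j (Finset.mem_univ j); linarith
      have := pow_le_pow_left₀ hyp.le hle 2
      exact one_div_le_one_div_of_le (by positivity) this
    · refine ⟨j0, Finset.mem_filter.mpr ⟨Finset.mem_univ _, hj0i⟩, ?_⟩
      have hx0 : x j0 = 0 := hx.2.1 j0 rfl
      have hy0 : y j0 = 0 := hy.2.1 j0 rfl
      have hyp : 0 < y i - y j0 := sub_pos.mpr (hy.1 hj0i)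
      have hlt : y i - y j0 < x i - x j0 := by rw [hx0, hy0]; linarith
      have := pow_lt_pow_left₀ hlt hyp.le two_ne_zero
      exact one_div_lt_one_div_of_lt (by positivity) this
  -- right sums
  have hR : (∑ j ∈ Finset.univ.filter (fun j => i < j), 1 / (y i - y j) ^ 2) ≤
      ∑ j ∈ Finset.univ.filter (fun j => i < j), 1 / (x i - x j) ^ 2 := by
    apply Finset.sum_le_sum
    intro j hj
    rw [Finset.mem_filter] at hj
    have hij : i < j := hj.2
    have hxp : 0 < x j - x i := sub_pos.mpr (hx.1 hij)
    have hle : x j - x i ≤ y j - y i := by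
      have := hi j (Finset.mem_univ j); linarith
    have hsq : (x i - x j) ^ 2 ≤ (y i - y j) ^ 2 := by
      have : (x j - x i) ^ 2 ≤ (y j - y i) ^ 2 := pow_le_pow_left₀ hxp.le hle 2
      calc (x i - x j) ^ 2 = (x j - x i) ^ 2 := by ring
        _ ≤ (y j - y i) ^ 2 := this
        _ = (y i - y j) ^ 2 := by ring
    apply one_div_le_one_div_of_le _ hsq
    have : (x j - x i) ^ 2 > 0 := by positivity
    calc (0:ℝ) < (x j - x i) ^ 2 := this
      _ = (x i - x j) ^ 2 := by ring
  linarith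

lemma needle_exists (n : ℕ) (hn : 3 ≤ n) : ∃ x, needleEquilibrium n x := by
  have hc : (0:ℝ) < (n:ℝ) - 1 := by
    have : (3:ℝ) ≤ (n:ℝ) := by exact_mod_cast hn
    linarith
  set c : ℝ := (n:ℝ) - 1 with hcdef
  set x0 : Fin n → ℝ := fun i => (i.val : ℝ) / c with hx0def
  have hx0K : ∀ δ : ℝ, δ ≤ 1 / c → x0 ∈ needleK n δ := by
    intro δ hδ
    refine ⟨?_, ?_, ?_⟩
    · intro i hi; simp [hx0def, hi]
    · intro i hi
      have hcast : ((i.val : ℕ) : ℝ) = c := by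
        rw [hi, hcdef]
        push_cast [Nat.cast_sub (by omega : 1 ≤ n)]
        ring
      simp only [hx0def, hcast]
      field_simp
    · intro i j hij
      have hlt : i.val < j.val := hij
      have h1 : (1:ℝ) ≤ (j.val:ℝ) - (i.val:ℝ) := by
        have h2 : i.val + 1 ≤ j.val := hlt
        have h3 := (Nat.cast_le (α := ℝ)).mpr h2
        push_cast at h3
        linarith
      have heq : x0 j - x0 i = ((j.val:ℝ) - (i.val:ℝ)) / c := by
        simp only [hx0def]; ring
      rw [heq]
      refine hδ.trans ?_
      gcongr
  have hx0mem : x0 ∈ needleK n (1 / c) := hx0K (1 / c) le_rfl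
  set C : ℝ := needleE n x0 with hCdef
  have hCc : c ≤ C := by
    have hj0i1 : (⟨0, by omega⟩ : Fin n) < (⟨1, by omega⟩ : Fin n) := by
      rw [Fin.lt_def]; norm_num
    have := needleE_term_le n (1/c) (by positivity) x0 hx0mem ⟨1, by omega⟩ ⟨0, by omega⟩ hj0i1
    have heq : x0 ⟨1, by omega⟩ - x0 ⟨0, by omega⟩ = 1 / c := by
      simp [hx0def]
    rw [heq, one_div, inv_inv] at this
    exact this
  have hC : 0 < C := lt_of_lt_of_le hc hCc
  set δ : ℝ := 1 / (2 * C) with hδdef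
  have hδ : 0 < δ := by positivity
  have hδC : δ < 1 / C := by
    rw [hδdef, div_lt_div_iff₀ (by positivity) hC]
    linarith
  have hδc : δ ≤ 1 / c := by
    rw [hδdef, div_le_div_iff₀ (by positivity) hc]
    linarith
  clear_value x0 C δ
  obtain ⟨z, hzK, hzmin⟩ := (isCompact_needleK n δ hn hδ).exists_isMinOn
    ⟨x0, hx0K δ hδc⟩ (continuousOn_needleE n δ hδ)
  have hEz : needleE n z ≤ C := by
    rw [hCdef]; exact hzmin (hx0K δ hδc)
  have gap : ∀ i j : Fin n, i < j → 1 / C ≤ z j - z i := by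
    intro i j hij
    have ht := needleE_term_le n δ hδ z hzK j i hij
    have hpos : 0 < z j - z i := lt_of_lt_of_le hδ (hzK.2.2 i j hij)
    rw [div_le_iff₀ hC]
    calc (1:ℝ) = (z j - z i) * (z j - z i)⁻¹ := (mul_inv_cancel₀ hpos.ne').symm
      _ ≤ (z j - z i) * C := by
          apply mul_le_mul_of_nonneg_left _ hpos.le
          linarith
  have hmono : StrictMono z := by
    intro i j hij
    have h1 := gap i j hij
    have h2 : (0:ℝ) < 1 / C := by positivity
    linarith
  have hbal : ∀ k : Fin n, 1 ≤ k.val → k.val ≤ n - 2 →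
      (∑ j ∈ Finset.univ.filter (fun j => j < k), ((z k - z j) ^ 2)⁻¹) =
        ∑ j ∈ Finset.univ.filter (fun j => k < j), ((z j - z k) ^ 2)⁻¹ := by
    intro k hk1 hk2
    have hdist : ∀ j, j ≠ k → z j ≠ z k := fun j hj => hmono.injective.ne hj
    set ε : ℝ := 1 / C - δ with hεdef
    clear_value ε
    have hε : 0 < ε := by rw [hεdef]; linarith
    have hupd : ∀ t : ℝ, |t - z k| < ε → Function.update z k t ∈ needleK n δ := by
      intro t ht
      rw [abs_lt] at ht
      refine ⟨?_, ?_, ?_⟩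
      · intro i hi
        rw [Function.update_of_ne (Fin.ne_of_val_ne (by omega))]
        exact hzK.1 i hi
      · intro i hi
        have hkn : k.val ≠ n - 1 := by omega
        rw [Function.update_of_ne (Fin.ne_of_val_ne (by omega))]
        exact hzK.2.1 i hi
      · intro i j hij
        obtain ⟨ht1, ht2⟩ := ht
        by_cases hik : i = k
        · have hjk : j ≠ k := by rw [← hik]; exact ne_of_gt hij
          rw [hik, Function.update_self, Function.update_of_ne hjk]
          have hg := gap k j (hik ▸ hij)
          linarith
        · by_cases hjk : j = k
          · rw [hjk, Function.update_self, Function.update_of_ne hik]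
            have hg := gap i k (hjk ▸ hij)
            linarith
          · rw [Function.update_of_ne hjk, Function.update_of_ne hik]
            exact hzK.2.2 i j hij
    have hloc : IsLocalMin (fun t => needleE n (Function.update z k t)) (z k) := by
      have hev : ∀ᶠ t in nhds (z k),
          needleE n z ≤ needleE n (Function.update z k t) := by
        filter_upwards [Metric.ball_mem_nhds (z k) hε] with t ht
        exact hzmin (hupd t (by rwa [Metric.mem_ball, Real.dist_eq] at ht))
      unfold IsLocalMin IsMinFilter
      simp only [Function.update_eq_self]
      exact hev
    have hzero := hloc.hasDerivAt_eq_zero (needleE_hasDerivAt n z k hdist)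
    linarith
  refine ⟨z, hmono, hzK.1, hzK.2.1, ?_⟩
  intro k hk1 hk2
  have := hbal k hk1 hk2
  calc (∑ j ∈ Finset.univ.filter (fun j => j < k), 1 / (z k - z j) ^ 2)
      = ∑ j ∈ Finset.univ.filter (fun j => j < k), ((z k - z j) ^ 2)⁻¹ := by
        apply Finset.sum_congr rfl; intro j _; rw [one_div]
    _ = ∑ j ∈ Finset.univ.filter (fun j => k < j), ((z j - z k) ^ 2)⁻¹ := this
    _ = ∑ j ∈ Finset.univ.filter (fun j => k < j), 1 / (z k - z j) ^ 2 := by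
        apply Finset.sum_congr rfl; intro j _
        rw [one_div]
        congr 1
        ring

/-- For every integer `n ≥ 3` there exists exactly one configuration of `n` charges at
equilibrium on the needle `[0,1]`. -/
theorem existsUnique_needle_equilibrium (n : ℕ) (hn : 3 ≤ n) :
    ∃! x : Fin n → ℝ, needleEquilibrium n x := by
  obtain ⟨x, hx⟩ := needle_exists n hn
  refine ⟨x, hx, ?_⟩
  intro y hy
  by_contra hne
  obtain ⟨i, hi⟩ := Function.ne_iff.mp hne
  rcases lt_or_gt_of_ne hi with h | h
  · exact needle_key n hn x y hx hy ⟨i, h⟩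
  · exact needle_key n hn y x hy hx ⟨i, h⟩
end

section
/- The function ω is strictly convex on U_{n−2}: for all A, B ∈ U_{n−2} with A ≠ B and all t ∈ (0,1), ω(tA + (1−t)B) < t·ω(A) + (1−t)·ω(B). -/
/-- Extend a point `(a_2, …, a_{n-1}) ∈ ℝ^{n-2}` to a full configuration on the needle,
with `a_1 = 0` and `a_n = 1` (0-indexed: position `0` is `0`, position `n-1` is `1`). -/
def extCfg (n : ℕ) (a : Fin (n - 2) → ℝ) : Fin n → ℝ := fun i =>
  if h0 : i.val = 0 then 0
  else if h1 : i.val = n - 1 then 1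
  else a ⟨i.val - 1, by have := i.isLt; omega⟩

/-- The open simplex `U_{n-2} = {0 < a_2 < ⋯ < a_{n-1} < 1} ⊆ ℝ^{n-2}`. -/
def needleU (n : ℕ) : Set (Fin (n - 2) → ℝ) :=
  {a | StrictMono (extCfg n a)}

/-- The interaction energy `ω(a_2,…,a_{n-1}) = ∑_{1 ≤ j < k ≤ n} 1/(a_k - a_j)`
(with `a_1 = 0`, `a_n = 1`). -/
noncomputable def needleOmega (n : ℕ) (a : Fin (n - 2) → ℝ) : ℝ :=
  ∑ p ∈ Finset.univ.filter (fun p : Fin n × Fin n => p.1 < p.2),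
    1 / (extCfg n a p.2 - extCfg n a p.1)

lemma extCfg_combo (n : ℕ) (A B : Fin (n - 2) → ℝ) (t : ℝ) (i : Fin n) :
    extCfg n (t • A + (1 - t) • B) i = t * extCfg n A i + (1 - t) * extCfg n B i := by
  unfold extCfg
  split_ifs with h0 h1
  · ring
  · ring
  · simp [smul_eq_mul]

lemma inv_combo_le {x y t : ℝ} (hx : 0 < x) (hy : 0 < y) (ht0 : 0 < t) (ht1 : t < 1) :
    1 / (t * x + (1 - t) * y) ≤ t * (1 / x) + (1 - t) * (1 / y) := by
  have h1t : 0 < 1 - t := by linarith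
  have hd : 0 < t * x + (1 - t) * y := by positivity
  have hR : t * (1 / x) + (1 - t) * (1 / y) = (t * y + (1 - t) * x) / (x * y) := by
    field_simp
  rw [hR, div_le_div_iff₀ hd (by positivity)]
  nlinarith [mul_nonneg (mul_pos ht0 h1t).le (sq_nonneg (x - y))]

lemma inv_combo_lt {x y t : ℝ} (hx : 0 < x) (hy : 0 < y) (ht0 : 0 < t) (ht1 : t < 1)
    (hxy : x ≠ y) :
    1 / (t * x + (1 - t) * y) < t * (1 / x) + (1 - t) * (1 / y) := by
  have h1t : 0 < 1 - t := by linarith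
  have hd : 0 < t * x + (1 - t) * y := by positivity
  have hsq : 0 < (x - y) ^ 2 := by
    have : x - y ≠ 0 := sub_ne_zero.2 hxy
    positivity
  have hR : t * (1 / x) + (1 - t) * (1 / y) = (t * y + (1 - t) * x) / (x * y) := by
    field_simp
  rw [hR, div_lt_div_iff₀ hd (by positivity)]
  nlinarith [mul_pos (mul_pos ht0 h1t) hsq]

/-- The function `ω` is strictly convex on `U_{n-2}`. -/
theorem needleOmega_strictConvexOn (n : ℕ) (hn : 4 ≤ n)
    (A B : Fin (n - 2) → ℝ) (hA : A ∈ needleU n) (hB : B ∈ needleU n) (hAB : A ≠ B)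
    (t : ℝ) (ht0 : 0 < t) (ht1 : t < 1) :
    needleOmega n (t • A + (1 - t) • B) <
      t * needleOmega n A + (1 - t) * needleOmega n B := by
  classical
  unfold needleOmega
  rw [Finset.mul_sum, Finset.mul_sum, ← Finset.sum_add_distrib]
  apply Finset.sum_lt_sum
  · intro p hp
    simp only [Finset.mem_filter, Finset.mem_univ, true_and] at hp
    have hdA : 0 < extCfg n A p.2 - extCfg n A p.1 := sub_pos.2 (hA hp)
    have hdB : 0 < extCfg n B p.2 - extCfg n B p.1 := sub_pos.2 (hB hp)
    rw [extCfg_combo, extCfg_combo]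
    have heq : t * extCfg n A p.2 + (1 - t) * extCfg n B p.2 -
        (t * extCfg n A p.1 + (1 - t) * extCfg n B p.1) =
        t * (extCfg n A p.2 - extCfg n A p.1) +
        (1 - t) * (extCfg n B p.2 - extCfg n B p.1) := by ring
    rw [heq]
    calc 1 / (t * (extCfg n A p.2 - extCfg n A p.1) +
          (1 - t) * (extCfg n B p.2 - extCfg n B p.1))
        ≤ t * (1 / (extCfg n A p.2 - extCfg n A p.1)) +
          (1 - t) * (1 / (extCfg n B p.2 - extCfg n B p.1)) :=
          inv_combo_le hdA hdB ht0 ht1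
      _ = t * (1 / (extCfg n A p.2 - extCfg n A p.1)) +
          (1 - t) * (1 / (extCfg n B p.2 - extCfg n B p.1)) := rfl
  · obtain ⟨i, hi⟩ := Function.ne_iff.1 hAB
    have hi2 : i.val < n - 2 := i.isLt
    refine ⟨(⟨0, by omega⟩, ⟨i.val + 1, by omega⟩), ?_, ?_⟩
    · simp only [Finset.mem_filter, Finset.mem_univ, true_and]
      exact Fin.mk_lt_mk.2 (Nat.succ_pos _)
    · have hval : ∀ (C : Fin (n - 2) → ℝ) (h : i.val + 1 < n),
          extCfg n C ⟨i.val + 1, h⟩ = C i := by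
        intro C h
        unfold extCfg
        have h0 : i.val + 1 ≠ 0 := by omega
        have h1 : i.val + 1 ≠ n - 1 := by omega
        simp only [h0, h1, dif_neg, not_false_iff]
        congr 1
      have h0val : ∀ (C : Fin (n - 2) → ℝ) (h : 0 < n),
          extCfg n C (⟨0, h⟩ : Fin n) = 0 := by
        intro C h; rfl
      have hApos : 0 < A i := by
        have := hA (show (⟨0, by omega⟩ : Fin n) < ⟨i.val + 1, by omega⟩ from
          Fin.mk_lt_mk.2 (Nat.succ_pos _))
        rwa [hval, h0val] at this
      have hBpos : 0 < B i := by
        have := hB (show (⟨0, by omega⟩ : Fin n) < ⟨i.val + 1, by omega⟩ from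
          Fin.mk_lt_mk.2 (Nat.succ_pos _))
        rwa [hval, h0val] at this
      simp only
      rw [extCfg_combo, extCfg_combo, hval, hval, h0val, h0val]
      have heq : t * A i + (1 - t) * B i - (t * 0 + (1 - t) * 0) =
          t * A i + (1 - t) * B i := by ring
      rw [heq]
      have := inv_combo_lt hApos hBpos ht0 ht1 hi
      calc 1 / (t * A i + (1 - t) * B i)
          < t * (1 / A i) + (1 - t) * (1 / B i) := this
        _ = t * (1 / (A i - 0)) + (1 - t) * (1 / (B i - 0)) := by ring_nf
end

section
/- The function ω tends to +∞ at the boundary of its domain: for every point y in the topological frontier of U_{n−2}, ω(a) tends to +∞ as a tends to y within U_{n−2}. -/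
lemma extCfg_continuous (n : ℕ) (i : Fin n) :
    Continuous fun a : Fin (n - 2) → ℝ => extCfg n a i := by
  unfold extCfg
  split_ifs with h0 h1
  · exact continuous_const
  · exact continuous_const
  · exact continuous_apply _

lemma needleU_isOpen (n : ℕ) : IsOpen (needleU n) := by
  have : needleU n = ⋂ p : Fin n × Fin n,
      {a | p.1 < p.2 → extCfg n a p.1 < extCfg n a p.2} := by
    ext a
    simp only [needleU, Set.mem_setOf_eq, Set.mem_iInter, Prod.forall]
    exact ⟨fun h i j hij => h hij, fun h i j hij => h i j hij⟩
  rw [this]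
  refine isOpen_iInter_of_finite fun p => ?_
  by_cases hp : p.1 < p.2
  · simp only [hp, forall_true_left]
    exact isOpen_lt (extCfg_continuous n p.1) (extCfg_continuous n p.2)
  · simp only [hp, false_implies]
    simp only [Set.setOf_true]
    exact isOpen_univ

lemma needleU_closure_monotone (n : ℕ) (y : Fin (n - 2) → ℝ)
    (hy : y ∈ closure (needleU n)) : Monotone (extCfg n y) := by
  have hcl : IsClosed {a : Fin (n - 2) → ℝ | Monotone (extCfg n a)} := by
    have : {a : Fin (n - 2) → ℝ | Monotone (extCfg n a)} = ⋂ p : Fin n × Fin n,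
        {a | p.1 ≤ p.2 → extCfg n a p.1 ≤ extCfg n a p.2} := by
      ext a
      simp only [Set.mem_setOf_eq, Set.mem_iInter, Prod.forall]
      exact ⟨fun h i j hij => h hij, fun h i j hij => h i j hij⟩
    rw [this]
    refine isClosed_iInter fun p => ?_
    by_cases hp : p.1 ≤ p.2
    · simp only [hp, forall_true_left]
      exact isClosed_le (extCfg_continuous n p.1) (extCfg_continuous n p.2)
    · simp only [hp, false_implies]
      simp only [Set.setOf_true]
      exact isClosed_univ
  exact closure_minimal (fun a ha => (show StrictMono (extCfg n a) from ha).monotone) hcl hy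


/-- The function `ω` tends to `+∞` at the boundary of its domain: for every point `y` in the
topological frontier of `U_{n-2}`, `ω(a) → +∞` as `a → y` within `U_{n-2}`. -/
theorem needleOmega_tendsto_atTop_frontier (n : ℕ) (hn : 4 ≤ n)
    (y : Fin (n - 2) → ℝ) (hy : y ∈ frontier (needleU n)) :
    Filter.Tendsto (needleOmega n) (nhdsWithin y (needleU n)) Filter.atTop := by
  rw [(needleU_isOpen n).frontier_eq] at hy
  obtain ⟨hycl, hynot⟩ := hy
  have hmono : Monotone (extCfg n y) := needleU_closure_monotone n y hycl
  have hnotsm : ¬ StrictMono (extCfg n y) := hynot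
  rw [StrictMono] at hnotsm
  push_neg at hnotsm
  obtain ⟨i, j, hij, hle⟩ := hnotsm
  have heq : extCfg n y i = extCfg n y j := le_antisymm (hmono hij.le) hle
  set g : (Fin (n - 2) → ℝ) → ℝ := fun a => extCfg n a j - extCfg n a i with hg
  have hgc : Continuous g := (extCfg_continuous n j).sub (extCfg_continuous n i)
  have hg0 : g y = 0 := by simp [hg, heq]
  have hgpos : ∀ a ∈ needleU n, 0 < g a := fun a ha => sub_pos.2 (ha hij)
  have htg : Filter.Tendsto g (nhdsWithin y (needleU n)) (nhdsWithin 0 (Set.Ioi 0)) := by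
    rw [tendsto_nhdsWithin_iff]
    constructor
    · have h1 : Filter.Tendsto g (nhdsWithin y (needleU n)) (nhds (g y)) :=
        (hgc.tendsto y).mono_left nhdsWithin_le_nhds
      rwa [hg0] at h1
    · exact eventually_nhdsWithin_of_forall fun a ha => Set.mem_Ioi.2 (hgpos a ha)
  have hinv : Filter.Tendsto (fun a => (g a)⁻¹) (nhdsWithin y (needleU n)) Filter.atTop :=
    htg.inv_tendsto_nhdsGT_zero
  refine Filter.tendsto_atTop_mono' _ ?_ hinv
  refine eventually_nhdsWithin_of_forall fun a ha => ?_
  have hmem : (i, j) ∈ Finset.univ.filter (fun p : Fin n × Fin n => p.1 < p.2) :=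
    Finset.mem_filter.2 ⟨Finset.mem_univ _, hij⟩
  have hb := Finset.single_le_sum
    (f := fun p : Fin n × Fin n => 1 / (extCfg n a p.2 - extCfg n a p.1))
    (fun p hp => le_of_lt (one_div_pos.2 (sub_pos.2 (ha (Finset.mem_filter.1 hp).2))))
    hmem
  simpa [needleOmega, hg, one_div] using hb
end

section
/- Let U be a nonempty open bounded convex subset of a finite-dimensional real normed vector space E, and let f : E → ℝ be differentiable on U, strictly convex on U, and such that f(a) tends to +∞ as a tends to any point of the frontier of U within U. Then f attains a minimum on U at a unique point x₀, and x₀ is the unique critical point of f in U (the unique point of U at which the derivative of f vanishes). -/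
open Filter Set

/-- Let `U` be a nonempty open bounded convex subset of a finite-dimensional real normed
vector space `E`, and let `f : E → ℝ` be differentiable on `U`, strictly convex on `U`, and
tend to `+∞` at every frontier point of `U` (along `U`). Then `f` attains a minimum on `U`
at a unique point `x₀`, and `x₀` is the unique critical point of `f` in `U`. -/
theorem exists_unique_min_and_critical_of_strictConvexOn
    (E : Type*) [NormedAddCommGroup E] [NormedSpace ℝ E] [FiniteDimensional ℝ E]
    (U : Set E) (hne : U.Nonempty) (hopen : IsOpen U)
    (hbdd : Bornology.IsBounded U) (hconv : Convex ℝ U)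
    (f : E → ℝ) (hdiff : ∀ x ∈ U, DifferentiableAt ℝ f x)
    (hsc : StrictConvexOn ℝ U f)
    (hblow : ∀ y ∈ frontier U, Filter.Tendsto f (nhdsWithin y U) Filter.atTop) :
    ∃ x₀ ∈ U, IsMinOn f U x₀ ∧ (∀ x ∈ U, IsMinOn f U x → x = x₀) ∧
      fderiv ℝ f x₀ = 0 ∧ ∀ x ∈ U, fderiv ℝ f x = 0 → x = x₀ := by
  obtain ⟨a, ha⟩ := hne
  set c := f a with hc
  set S : Set E := {x ∈ U | f x ≤ c} with hS
  have hSU : S ⊆ U := fun x hx => hx.1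
  have haS : a ∈ S := ⟨ha, le_rfl⟩
  -- S is closed
  have hSclosed : IsClosed S := by
    rw [← closure_subset_iff_isClosed]
    intro y hy
    have hyU : y ∈ closure U := closure_mono hSU hy
    have hne' : (nhdsWithin y S).NeBot := mem_closure_iff_clusterPt.1 hy
    have hle : ∀ᶠ x in nhdsWithin y S, f x ≤ c :=
      eventually_nhdsWithin_of_forall (fun x hx => hx.2)
    by_cases hyU' : y ∈ U
    · have hcont : ContinuousAt f y := (hdiff y hyU').continuousAt
      have : Tendsto f (nhdsWithin y S) (nhds (f y)) :=
        hcont.continuousWithinAt.tendsto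
      exact ⟨hyU', le_of_tendsto this hle⟩
    · exfalso
      have hyfr : y ∈ frontier U := by
        rw [hopen.frontier_eq]
        exact ⟨hyU, hyU'⟩
      have htop : Tendsto f (nhdsWithin y S) atTop :=
        (hblow y hyfr).mono_left (nhdsWithin_mono y hSU)
      have := (htop.eventually_gt_atTop c).and hle
      obtain ⟨x, hx1, hx2⟩ := this.exists
      exact absurd hx2 (not_le.2 hx1)
  have hScompact : IsCompact S :=
    Metric.isCompact_of_isClosed_isBounded hSclosed (hbdd.subset hSU)
  have hfc : ContinuousOn f S := fun x hx =>
    (hdiff x (hSU hx)).continuousAt.continuousWithinAt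
  obtain ⟨x₀, hx₀S, hx₀min⟩ := hScompact.exists_isMinOn ⟨a, haS⟩ hfc
  have hx₀U : x₀ ∈ U := hSU hx₀S
  have hminU : IsMinOn f U x₀ := by
    intro x hx
    by_cases hxS : f x ≤ c
    · exact hx₀min ⟨hx, hxS⟩
    · exact le_trans (hx₀min haS) (le_of_lt (not_le.1 hxS))
  have huniq : ∀ x ∈ U, IsMinOn f U x → x = x₀ :=
    fun x hx hxmin => hsc.eq_of_isMinOn hxmin hminU hx hx₀U
  -- critical point
  have hcrit : fderiv ℝ f x₀ = 0 := by
    have : IsLocalMin f x₀ := hminU.isLocalMin (hopen.mem_nhds hx₀U)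
    exact this.fderiv_eq_zero
  refine ⟨x₀, hx₀U, hminU, huniq, hcrit, ?_⟩
  intro x hx hfx
  -- show x is a min on U, then uniqueness
  apply huniq x hx
  rw [isMinOn_iff]
  intro y hy
  by_cases hxy : y = x
  · simp [hxy]
  -- directional derivative argument
  have hderivf : HasFDerivAt f (0 : E →L[ℝ] ℝ) x := hfx ▸ (hdiff x hx).hasFDerivAt
  set φ : ℝ → ℝ := fun t => f (x + t • (y - x)) with hφ
  have hline : HasDerivAt (fun t : ℝ => x + t • (y - x)) (y - x) 0 := by
    simpa using ((hasDerivAt_id (0:ℝ)).smul_const (y - x)).const_add x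
  have hφd : HasDerivAt φ 0 0 := by
    have hderivf' : HasFDerivAt f (0 : E →L[ℝ] ℝ) (x + (0:ℝ) • (y - x)) := by
      simpa using hderivf
    have := hderivf'.comp_hasDerivAt (0:ℝ) hline
    simp at this; exact this
  have hslope : Tendsto (slope φ 0) (nhdsWithin 0 {(0:ℝ)}ᶜ) (nhds 0) :=
    hasDerivAt_iff_tendsto_slope.1 hφd
  have hslope' : Tendsto (slope φ 0) (nhdsWithin 0 (Ioo (0:ℝ) 1)) (nhds 0) :=
    hslope.mono_left (nhdsWithin_mono 0 (fun t ht => ne_of_gt ht.1))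
  have hbound : ∀ᶠ t in nhdsWithin 0 (Ioo (0:ℝ) 1), slope φ 0 t ≤ f y - f x := by
    apply eventually_nhdsWithin_of_forall
    intro t ht
    have hconvf := hsc.convexOn.2 hx hy (by linarith [ht.2] : (0:ℝ) ≤ 1 - t) ht.1.le (by ring)
    have hφt : φ t ≤ (1 - t) * f x + t * f y := by
      have : x + t • (y - x) = (1 - t) • x + t • y := by module
      simpa [hφ, this, smul_eq_mul] using hconvf
    have hφ0 : φ 0 = f x := by simp [hφ]
    rw [slope_def_field, sub_zero, div_le_iff₀ ht.1]
    nlinarith [hφt, hφ0]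
  have hne0 : (nhdsWithin (0:ℝ) (Ioo 0 1)).NeBot := by
    apply mem_closure_iff_clusterPt.1
    rw [closure_Ioo one_ne_zero.symm]
    exact ⟨le_rfl, zero_le_one⟩
  have h0le : (0:ℝ) ≤ f y - f x := le_of_tendsto hslope' hbound
  linarith
end

section
/- The equilibrium configuration is symmetric about the midpoint of the needle: if x_1 < x_2 < ⋯ < x_n is a configuration of n charges at equilibrium on the needle [0,1], then for every k with 1 ≤ k ≤ n, x_k = 1 − x_{n+1−k}. -/
lemma needle_le (n : ℕ) (hn : 3 ≤ n) (x y : Fin n → ℝ)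
    (hx : needleEquilibrium n x) (hy : needleEquilibrium n y) (k : Fin n) :
    x k ≤ y k := by
  by_contra hk
  push_neg at hk
  set d : Fin n → ℝ := fun i => x i - y i with hd
  obtain ⟨m, -, hm⟩ := Finset.exists_max_image (Finset.univ : Finset (Fin n)) d
    ⟨k, Finset.mem_univ k⟩
  set t : Finset (Fin n) := Finset.univ.filter (fun j => d m ≤ d j) with ht
  have hmt : m ∈ t := by simp [ht]
  set i₀ : Fin n := t.max' ⟨m, hmt⟩ with hi₀
  have hi₀t : i₀ ∈ t := t.max'_mem _
  have hdi₀ : ∀ j, d j ≤ d i₀ := by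
    intro j
    have h1 := hm j (Finset.mem_univ j)
    have h2 : d m ≤ d i₀ := (Finset.mem_filter.mp hi₀t).2
    linarith
  have hlt : ∀ j, i₀ < j → d j < d i₀ := by
    intro j hj
    by_contra hc
    push_neg at hc
    have hjt : j ∈ t := by
      simp only [ht, Finset.mem_filter, Finset.mem_univ, true_and]
      have := hdi₀ j
      have h2 : d m ≤ d i₀ := (Finset.mem_filter.mp hi₀t).2
      linarith
    exact absurd (Finset.le_max' t j hjt) (not_le.mpr hj)
  have hpos : 0 < d i₀ := lt_of_lt_of_le (by simp [hd]; linarith) (hdi₀ k)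
  have hne0 : i₀.val ≠ 0 := by
    intro h0
    have := hx.2.1 i₀ h0
    have := hy.2.1 i₀ h0
    simp [hd] at hpos; linarith
  have hnen : i₀.val ≠ n - 1 := by
    intro h0
    have := hx.2.2.1 i₀ h0
    have := hy.2.2.1 i₀ h0
    simp [hd] at hpos; linarith
  have h1 : 1 ≤ i₀.val := by omega
  have h2 : i₀.val ≤ n - 2 := by have := i₀.isLt; omega
  have hL : (∑ j ∈ Finset.univ.filter (fun j => j < i₀), 1 / (x i₀ - x j) ^ 2) ≤
      ∑ j ∈ Finset.univ.filter (fun j => j < i₀), 1 / (y i₀ - y j) ^ 2 := by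
    apply Finset.sum_le_sum
    intro j hj
    have hji : j < i₀ := (Finset.mem_filter.mp hj).2
    have hy0 : 0 < y i₀ - y j := sub_pos.mpr (hy.1 hji)
    have hle : y i₀ - y j ≤ x i₀ - x j := by
      have := hdi₀ j; simp [hd] at this; linarith
    have hsq : (y i₀ - y j) ^ 2 ≤ (x i₀ - x j) ^ 2 := by nlinarith
    exact one_div_le_one_div_of_le (by positivity) hsq
  have hR : (∑ j ∈ Finset.univ.filter (fun j => i₀ < j), 1 / (y i₀ - y j) ^ 2) <
      ∑ j ∈ Finset.univ.filter (fun j => i₀ < j), 1 / (x i₀ - x j) ^ 2 := by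
    apply Finset.sum_lt_sum_of_nonempty
    · refine ⟨⟨n - 1, by omega⟩, ?_⟩
      simp only [Finset.mem_filter, Finset.mem_univ, true_and]
      exact Fin.lt_def.mpr (by simp; omega)
    · intro j hj
      have hij : i₀ < j := (Finset.mem_filter.mp hj).2
      have hx0 : 0 < x j - x i₀ := sub_pos.mpr (hx.1 hij)
      have hltd : x j - x i₀ < y j - y i₀ := by
        have := hlt j hij; simp [hd] at this; linarith
      have hsq : (x i₀ - x j) ^ 2 < (y i₀ - y j) ^ 2 := by nlinarith
      have hp : 0 < (x i₀ - x j) ^ 2 := by nlinarith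
      exact one_div_lt_one_div_of_lt hp hsq
  have hex := hx.2.2.2 i₀ h1 h2
  have hey := hy.2.2.2 i₀ h1 h2
  linarith

lemma needle_rev (n : ℕ) (hn : 3 ≤ n) (x : Fin n → ℝ) (hx : needleEquilibrium n x) :
    needleEquilibrium n (fun k => 1 - x k.rev) := by
  refine ⟨?_, ?_, ?_, ?_⟩
  · intro a b hab
    have : b.rev < a.rev := Fin.rev_lt_rev.mpr hab
    have := hx.1 this
    simp only
    linarith
  · intro i hi
    have : i.rev.val = n - 1 := by simp only [Fin.val_rev, hi]; try omega
    simp [hx.2.2.1 i.rev this]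
  · intro i hi
    have : i.rev.val = 0 := by simp only [Fin.val_rev, hi]; have := i.isLt; omega
    simp [hx.2.1 i.rev this]
  · intro i hi1 hi2
    have hrl : 1 ≤ i.rev.val := by simp only [Fin.val_rev]; omega
    have hrh : i.rev.val ≤ n - 2 := by have := i.isLt; simp only [Fin.val_rev]; omega
    have key := hx.2.2.2 i.rev hrl hrh
    have hLeft : (∑ j ∈ Finset.univ.filter (fun j => j < i),
        1 / ((1 - x i.rev) - (1 - x j.rev)) ^ 2) =
        ∑ j ∈ Finset.univ.filter (fun j => i.rev < j), 1 / (x i.rev - x j) ^ 2 := by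
      apply Finset.sum_equiv (Fin.revPerm)
      · intro j
        simp only [Finset.mem_filter, Finset.mem_univ, true_and, Fin.revPerm_apply]
        have hij := i.isLt; have hjj := j.isLt
        simp only [Fin.lt_def, Fin.val_rev]
        omega
      · intro j hj
        simp only [Fin.revPerm_apply]
        ring_nf
    have hRight : (∑ j ∈ Finset.univ.filter (fun j => i < j),
        1 / ((1 - x i.rev) - (1 - x j.rev)) ^ 2) =
        ∑ j ∈ Finset.univ.filter (fun j => j < i.rev), 1 / (x i.rev - x j) ^ 2 := by
      apply Finset.sum_equiv (Fin.revPerm)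
      · intro j
        simp only [Finset.mem_filter, Finset.mem_univ, true_and, Fin.revPerm_apply]
        have hij := i.isLt; have hjj := j.isLt
        simp only [Fin.lt_def, Fin.val_rev]
        omega
      · intro j hj
        simp only [Fin.revPerm_apply]
        ring_nf
    simp only
    rw [hLeft, hRight, key]

/-- The equilibrium configuration is symmetric about the midpoint of the needle: if
`x_1 < ⋯ < x_n` is a configuration of `n` charges at equilibrium on `[0,1]`, then
for every `k`, `x_k = 1 - x_{n+1-k}` (0-indexed: `x k = 1 - x (n-1-k)`). -/
theorem needleEquilibrium_symm (n : ℕ) (hn : 3 ≤ n) (x : Fin n → ℝ)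
    (hx : needleEquilibrium n x) (k : Fin n) :
    x k = 1 - x ⟨n - 1 - k.val, by omega⟩ := by
  have hy := needle_rev n hn x hx
  have h1 := needle_le n hn x _ hx hy k
  have h2 := needle_le n hn _ x hy hx k
  have hxy : x k = 1 - x k.rev := le_antisymm h1 h2
  have hrk : k.rev = ⟨n - 1 - k.val, by omega⟩ := by
    apply Fin.ext; simp only [Fin.val_rev]; omega
  rw [hxy, hrk]
end

section
/- For a real number α with 0 < α < 1/2, the tuple (0, α, 1−α, 1) is a configuration of 4 charges at equilibrium on the needle [0,1] if and only if 1/α² = 1/(1−α)² + 1/(1−2α)², and this equation holds if and only if α⁴ + 6α³ − 11α² + 6α − 1 = 0. -/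
/-- For `0 < α < 1/2`, the tuple `(0, α, 1-α, 1)` is a configuration of 4 charges at
equilibrium on the needle `[0,1]` iff `1/α² = 1/(1-α)² + 1/(1-2α)²`, and this equation
holds iff `α⁴ + 6α³ - 11α² + 6α - 1 = 0`. -/
theorem needleEquilibrium_four (α : ℝ) (h0 : 0 < α) (h1 : α < 1 / 2) :
    (needleEquilibrium 4 ![0, α, 1 - α, 1] ↔
        1 / α ^ 2 = 1 / (1 - α) ^ 2 + 1 / (1 - 2 * α) ^ 2) ∧
      (1 / α ^ 2 = 1 / (1 - α) ^ 2 + 1 / (1 - 2 * α) ^ 2 ↔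
        α ^ 4 + 6 * α ^ 3 - 11 * α ^ 2 + 6 * α - 1 = 0) := by
  have hα : α ≠ 0 := ne_of_gt h0
  have hα1 : (1 : ℝ) - α ≠ 0 := by nlinarith
  have hα2 : (1 : ℝ) - 2 * α ≠ 0 := by nlinarith
  have hf1 : Finset.univ.filter (fun j => j < (1 : Fin 4)) = {0} := by decide
  have hf1' : Finset.univ.filter (fun j => (1 : Fin 4) < j) = ({2, 3} : Finset (Fin 4)) := by
    decide
  have hf2 : Finset.univ.filter (fun j => j < (2 : Fin 4)) = ({0, 1} : Finset (Fin 4)) := by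
    decide
  have hf2' : Finset.univ.filter (fun j => (2 : Fin 4) < j) = {3} := by decide
  have e1 : (∑ j ∈ Finset.univ.filter (fun j => j < (1 : Fin 4)),
        1 / (![0, α, 1 - α, 1] 1 - ![0, α, 1 - α, 1] j) ^ 2) =
      1 / α ^ 2 := by
    rw [hf1]; norm_num
  have e1' : (∑ j ∈ Finset.univ.filter (fun j => (1 : Fin 4) < j),
        1 / (![0, α, 1 - α, 1] 1 - ![0, α, 1 - α, 1] j) ^ 2) =
      1 / (1 - 2 * α) ^ 2 + 1 / (1 - α) ^ 2 := by
    rw [hf1', Finset.sum_insert (by decide), Finset.sum_singleton]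
    norm_num [Matrix.cons_val_two, Matrix.cons_val_three]
    rw [show (α - (1 - α)) ^ 2 = (1 - 2 * α) ^ 2 by ring,
      show (α - 1) ^ 2 = (1 - α) ^ 2 by ring]
  have e2 : (∑ j ∈ Finset.univ.filter (fun j => j < (2 : Fin 4)),
        1 / (![0, α, 1 - α, 1] 2 - ![0, α, 1 - α, 1] j) ^ 2) =
      1 / (1 - α) ^ 2 + 1 / (1 - 2 * α) ^ 2 := by
    rw [hf2, Finset.sum_insert (by decide), Finset.sum_singleton]
    norm_num [Matrix.cons_val_two, Matrix.cons_val_three]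
    rw [show (1 - α - α) ^ 2 = (1 - 2 * α) ^ 2 by ring]
  have e2' : (∑ j ∈ Finset.univ.filter (fun j => (2 : Fin 4) < j),
        1 / (![0, α, 1 - α, 1] 2 - ![0, α, 1 - α, 1] j) ^ 2) =
      1 / α ^ 2 := by
    rw [hf2', Finset.sum_singleton]
    norm_num [Matrix.cons_val_two, Matrix.cons_val_three]
  constructor
  · constructor
    · rintro ⟨-, -, -, hbal⟩
      have := hbal 1 (by norm_num) (by norm_num)
      rw [e1, e1'] at this
      linarith
    · intro h
      refine ⟨?_, ?_, ?_, ?_⟩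
      · intro i j hij
        fin_cases i <;> fin_cases j <;>
          first
          | exact absurd hij (by decide)
          | · show (![0, α, 1 - α, 1] : Fin 4 → ℝ) _ < ![0, α, 1 - α, 1] _
              norm_num <;> nlinarith
      · intro i hi
        fin_cases i
        · norm_num
        all_goals exact absurd hi (by norm_num)
      · intro i hi
        fin_cases i
        rotate_right
        · norm_num
        all_goals exact absurd hi (by norm_num)
      · intro i hi1 hi2
        fin_cases i
        · exact absurd hi1 (by norm_num)
        · show (∑ j ∈ Finset.univ.filter (fun j => j < (1 : Fin 4)),
                1 / (![0, α, 1 - α, 1] 1 - ![0, α, 1 - α, 1] j) ^ 2) =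
              ∑ j ∈ Finset.univ.filter (fun j => (1 : Fin 4) < j),
                1 / (![0, α, 1 - α, 1] 1 - ![0, α, 1 - α, 1] j) ^ 2
          rw [e1, e1']; linarith
        · show (∑ j ∈ Finset.univ.filter (fun j => j < (2 : Fin 4)),
                1 / (![0, α, 1 - α, 1] 2 - ![0, α, 1 - α, 1] j) ^ 2) =
              ∑ j ∈ Finset.univ.filter (fun j => (2 : Fin 4) < j),
                1 / (![0, α, 1 - α, 1] 2 - ![0, α, 1 - α, 1] j) ^ 2
          rw [e2, e2']; linarith
        · exact absurd hi2 (by norm_num)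
  · rw [div_add_div _ _ (pow_ne_zero 2 hα1) (pow_ne_zero 2 hα2),
      div_eq_div_iff (pow_ne_zero 2 hα) (by positivity)]
    constructor
    · intro h; nlinarith [h]
    · intro h; nlinarith [h]
end

section
/- Interlacing of equilibria: let n ≥ 3, let x_1 < x_2 < ⋯ < x_n be the configuration of n charges at equilibrium on [0,1], and let y_1 < y_2 < ⋯ < y_{n+1} be the configuration of n+1 charges at equilibrium on [0,1]. Then for every k with 2 ≤ k ≤ n, x_{k−1} < y_k < x_k. -/
private lemma needle_filter_lt (n : ℕ) (i : Fin n) (F : ℕ → ℝ) :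
    ∑ j ∈ Finset.univ.filter (fun j => j < i), F j.val = ∑ j ∈ Finset.range i.val, F j := by
  rw [Finset.sum_filter]
  simp only [Fin.lt_def]
  rw [Fin.sum_univ_eq_sum_range (fun j => if j < i.val then F j else 0), ← Finset.sum_filter]
  congr 1
  ext j
  simp only [Finset.mem_filter, Finset.mem_range]
  omega

private lemma needle_filter_gt (n : ℕ) (i : Fin n) (F : ℕ → ℝ) :
    ∑ j ∈ Finset.univ.filter (fun j => i < j), F j.val = ∑ j ∈ Finset.Ico (i.val+1) n, F j := by
  rw [Finset.sum_filter]
  simp only [Fin.lt_def]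
  rw [Fin.sum_univ_eq_sum_range (fun j => if i.val < j then F j else 0), ← Finset.sum_filter]
  congr 1
  ext j
  simp only [Finset.mem_filter, Finset.mem_range, Finset.mem_Ico]
  omega

/-- Core contradiction for the upper interlacing: an interior maximizer of `Y i - X i`
contradicts the equilibrium equations. -/
private lemma needle_core_A (n : ℕ) (hn : 3 ≤ n) (X Y : ℕ → ℝ)
    (monX : ∀ i j, i < j → j < n → X i < X j)
    (monY : ∀ i j, i < j → j < n + 1 → Y i < Y j)
    (eqX : ∀ k, 1 ≤ k → k ≤ n - 2 →
      ∑ j ∈ Finset.range k, 1/(X k - X j)^2 = ∑ j ∈ Finset.Ico (k+1) n, 1/(X k - X j)^2)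
    (eqY : ∀ k, 1 ≤ k → k ≤ n - 1 →
      ∑ j ∈ Finset.range k, 1/(Y k - Y j)^2 = ∑ j ∈ Finset.Ico (k+1) (n+1), 1/(Y k - Y j)^2)
    (k : ℕ) (hk1 : 1 ≤ k) (hk2 : k ≤ n - 2)
    (hmax : ∀ i, i < n → Y i - X i ≤ Y k - X k) : False := by
  have S1 : ∑ j ∈ Finset.range k, 1/(Y k - Y j)^2 ≤ ∑ j ∈ Finset.range k, 1/(X k - X j)^2 := by
    apply Finset.sum_le_sum
    intro j hj
    rw [Finset.mem_range] at hj
    have h1 : 0 < X k - X j := sub_pos.mpr (monX j k hj (by omega))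
    have h2 : X k - X j ≤ Y k - Y j := by have := hmax j (by omega); linarith
    apply one_div_le_one_div_of_le (by positivity)
    exact pow_le_pow_left₀ h1.le h2 2
  have S2 : ∑ j ∈ Finset.Ico (k+1) n, 1/(X k - X j)^2
      ≤ ∑ j ∈ Finset.Ico (k+1) n, 1/(Y k - Y j)^2 := by
    apply Finset.sum_le_sum
    intro j hj
    rw [Finset.mem_Ico] at hj
    have h1 : 0 < Y j - Y k := sub_pos.mpr (monY k j (by omega) (by omega))
    have h2 : Y j - Y k ≤ X j - X k := by have := hmax j (by omega); linarith
    rw [show (X k - X j)^2 = (X j - X k)^2 by ring, show (Y k - Y j)^2 = (Y j - Y k)^2 by ring]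
    apply one_div_le_one_div_of_le (by positivity)
    exact pow_le_pow_left₀ h1.le h2 2
  have S3 : ∑ j ∈ Finset.Ico (k+1) (n+1), 1/(Y k - Y j)^2
      = ∑ j ∈ Finset.Ico (k+1) n, 1/(Y k - Y j)^2 + 1/(Y k - Y n)^2 :=
    Finset.sum_Ico_succ_top (by omega) _
  have hpos : 0 < 1/(Y k - Y n)^2 := by
    have h1 : 0 < Y n - Y k := sub_pos.mpr (monY k n (by omega) (by omega))
    rw [show (Y k - Y n)^2 = (Y n - Y k)^2 by ring]
    positivity
  have e1 := eqX k hk1 hk2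
  have e2 := eqY k hk1 (by omega)
  linarith

/-- Core contradiction for the lower interlacing: an interior maximizer of `X i - Y (i+1)`
contradicts the equilibrium equations. -/
private lemma needle_core_B (n : ℕ) (hn : 3 ≤ n) (X Y : ℕ → ℝ)
    (monX : ∀ i j, i < j → j < n → X i < X j)
    (monY : ∀ i j, i < j → j < n + 1 → Y i < Y j)
    (eqX : ∀ k, 1 ≤ k → k ≤ n - 2 →
      ∑ j ∈ Finset.range k, 1/(X k - X j)^2 = ∑ j ∈ Finset.Ico (k+1) n, 1/(X k - X j)^2)
    (eqY : ∀ k, 1 ≤ k → k ≤ n - 1 →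
      ∑ j ∈ Finset.range k, 1/(Y k - Y j)^2 = ∑ j ∈ Finset.Ico (k+1) (n+1), 1/(Y k - Y j)^2)
    (k : ℕ) (hk1 : 1 ≤ k) (hk2 : k ≤ n - 2)
    (hmax : ∀ i, i < n → X i - Y (i+1) ≤ X k - Y (k+1)) : False := by
  have S1 : ∑ j ∈ Finset.range k, 1/(X k - X j)^2
      ≤ ∑ j ∈ Finset.range k, 1/(Y (k+1) - Y (j+1))^2 := by
    apply Finset.sum_le_sum
    intro j hj
    rw [Finset.mem_range] at hj
    have h1 : 0 < Y (k+1) - Y (j+1) := sub_pos.mpr (monY (j+1) (k+1) (by omega) (by omega))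
    have h2 : Y (k+1) - Y (j+1) ≤ X k - X j := by have := hmax j (by omega); linarith
    apply one_div_le_one_div_of_le (by positivity)
    exact pow_le_pow_left₀ h1.le h2 2
  have S2 : ∑ j ∈ Finset.Ico (k+1) n, 1/(Y (k+1) - Y (j+1))^2
      ≤ ∑ j ∈ Finset.Ico (k+1) n, 1/(X k - X j)^2 := by
    apply Finset.sum_le_sum
    intro j hj
    rw [Finset.mem_Ico] at hj
    have h1 : 0 < X j - X k := sub_pos.mpr (monX k j (by omega) (by omega))
    have h2 : X j - X k ≤ Y (j+1) - Y (k+1) := by have := hmax j (by omega); linarith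
    rw [show (X k - X j)^2 = (X j - X k)^2 by ring,
        show (Y (k+1) - Y (j+1))^2 = (Y (j+1) - Y (k+1))^2 by ring]
    apply one_div_le_one_div_of_le (by positivity)
    exact pow_le_pow_left₀ h1.le h2 2
  have e2 := eqY (k+1) (by omega) (by omega)
  have L : ∑ j ∈ Finset.range (k+1), 1/(Y (k+1) - Y j)^2
      = (∑ j ∈ Finset.range k, 1/(Y (k+1) - Y (j+1))^2) + 1/(Y (k+1) - Y 0)^2 :=
    Finset.sum_range_succ' _ k
  have R : ∑ j ∈ Finset.Ico (k+2) (n+1), 1/(Y (k+1) - Y j)^2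
      = ∑ j ∈ Finset.Ico (k+1) n, 1/(Y (k+1) - Y (j+1))^2 := by
    rw [Finset.sum_Ico_eq_sum_range, Finset.sum_Ico_eq_sum_range,
        show n + 1 - (k+2) = n - (k+1) from by omega]
    exact Finset.sum_congr rfl fun j _ => by rw [show k+2+j = k+1+j+1 from by omega]
  have hpos : 0 < 1/(Y (k+1) - Y 0)^2 := by
    have h1 : 0 < Y (k+1) - Y 0 := sub_pos.mpr (monY 0 (k+1) (by omega) (by omega))
    positivity
  have e1 := eqX k hk1 hk2
  rw [L, R] at e2
  linarith

private lemma needle_claim_A (n : ℕ) (hn : 3 ≤ n) (X Y : ℕ → ℝ)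
    (monX : ∀ i j, i < j → j < n → X i < X j)
    (monY : ∀ i j, i < j → j < n + 1 → Y i < Y j)
    (X0 : X 0 = 0) (Y0 : Y 0 = 0) (Xtop : X (n-1) = 1) (Ytop : Y n = 1)
    (eqX : ∀ k, 1 ≤ k → k ≤ n - 2 →
      ∑ j ∈ Finset.range k, 1/(X k - X j)^2 = ∑ j ∈ Finset.Ico (k+1) n, 1/(X k - X j)^2)
    (eqY : ∀ k, 1 ≤ k → k ≤ n - 1 →
      ∑ j ∈ Finset.range k, 1/(Y k - Y j)^2 = ∑ j ∈ Finset.Ico (k+1) (n+1), 1/(Y k - Y j)^2)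
    (k : ℕ) (hk1 : 1 ≤ k) (hk2 : k ≤ n - 1) : Y k < X k := by
  obtain ⟨k0, hk0mem, hk0max⟩ := Finset.exists_max_image (Finset.range n)
    (fun i => Y i - X i) ⟨0, Finset.mem_range.mpr (by omega)⟩
  rw [Finset.mem_range] at hk0mem
  have hmax : ∀ i, i < n → Y i - X i ≤ Y k0 - X k0 := fun i hi =>
    hk0max i (Finset.mem_range.mpr hi)
  have htop : Y (n-1) - X (n-1) < 0 := by
    have h1 : Y (n-1) < Y n := monY (n-1) n (by omega) (by omega)
    rw [Xtop, Ytop] at *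
    linarith
  have hδ0 : 0 ≤ Y k0 - X k0 := by
    have := hmax 0 (by omega)
    rw [X0, Y0] at this
    linarith
  by_cases h0 : k0 = 0
  · have hδ : Y k0 - X k0 = 0 := by subst h0; rw [X0, Y0]; ring
    by_contra hc
    push_neg at hc
    have hkk : Y k - X k = 0 := le_antisymm (by have := hmax k (by omega); linarith)
      (by linarith)
    have hktop : k ≠ n - 1 := by
      intro h
      rw [h] at hkk
      linarith
    exact (needle_core_A n hn X Y monX monY eqX eqY k hk1 (by omega)
      (fun i hi => by have := hmax i hi; linarith)).elim
  · have hk0top : k0 ≠ n - 1 := by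
      intro h
      rw [h] at hδ0
      linarith
    exact (needle_core_A n hn X Y monX monY eqX eqY k0 (by omega) (by omega) hmax).elim

private lemma needle_claim_B (n : ℕ) (hn : 3 ≤ n) (X Y : ℕ → ℝ)
    (monX : ∀ i j, i < j → j < n → X i < X j)
    (monY : ∀ i j, i < j → j < n + 1 → Y i < Y j)
    (X0 : X 0 = 0) (Y0 : Y 0 = 0) (Xtop : X (n-1) = 1) (Ytop : Y n = 1)
    (eqX : ∀ k, 1 ≤ k → k ≤ n - 2 →
      ∑ j ∈ Finset.range k, 1/(X k - X j)^2 = ∑ j ∈ Finset.Ico (k+1) n, 1/(X k - X j)^2)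
    (eqY : ∀ k, 1 ≤ k → k ≤ n - 1 →
      ∑ j ∈ Finset.range k, 1/(Y k - Y j)^2 = ∑ j ∈ Finset.Ico (k+1) (n+1), 1/(Y k - Y j)^2)
    (k : ℕ) (hk2 : k ≤ n - 2) : X k < Y (k+1) := by
  by_cases h0 : k = 0
  · subst h0
    rw [X0, ← Y0]
    exact monY 0 1 (by omega) (by omega)
  by_contra hc
  push_neg at hc
  obtain ⟨k0, hk0mem, hk0max⟩ := Finset.exists_max_image (Finset.range n)
    (fun i => X i - Y (i+1)) ⟨0, Finset.mem_range.mpr (by omega)⟩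
  rw [Finset.mem_range] at hk0mem
  have hmax : ∀ i, i < n → X i - Y (i+1) ≤ X k0 - Y (k0+1) := fun i hi =>
    hk0max i (Finset.mem_range.mpr hi)
  have hε0 : 0 ≤ X k0 - Y (k0+1) := by
    have := hmax k (by omega)
    linarith
  have hk0ne0 : k0 ≠ 0 := by
    intro h
    rw [h, X0] at hε0
    have h1 : Y 0 < Y 1 := monY 0 1 (by omega) (by omega)
    rw [Y0] at h1
    norm_num at hε0
    linarith
  by_cases htop : k0 = n - 1
  · have hε : X k0 - Y (k0+1) = 0 := by
      rw [htop, Xtop, show n - 1 + 1 = n from by omega, Ytop]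
      ring
    exact needle_core_B n hn X Y monX monY eqX eqY k (by omega) hk2
      (fun i hi => by have := hmax i hi; linarith)
  · exact needle_core_B n hn X Y monX monY eqX eqY k0 (by omega) (by omega) hmax

/-- Extract ℕ-indexed data from a `needleEquilibrium` via the extension-by-zero `X`. -/
private lemma needle_nat_data (n : ℕ) (hn : 3 ≤ n) (x : Fin n → ℝ)
    (hx : needleEquilibrium n x) :
    (∀ i j, i < j → j < n → (fun m => if h : m < n then x ⟨m, h⟩ else 0) i
        < (fun m => if h : m < n then x ⟨m, h⟩ else 0) j) ∧
    (fun m => if h : m < n then x ⟨m, h⟩ else 0) 0 = 0 ∧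
    (fun m => if h : m < n then x ⟨m, h⟩ else 0) (n-1) = 1 ∧
    (∀ k, 1 ≤ k → k ≤ n - 2 →
      ∑ j ∈ Finset.range k, 1/((fun m => if h : m < n then x ⟨m, h⟩ else 0) k
          - (fun m => if h : m < n then x ⟨m, h⟩ else 0) j)^2
        = ∑ j ∈ Finset.Ico (k+1) n, 1/((fun m => if h : m < n then x ⟨m, h⟩ else 0) k
          - (fun m => if h : m < n then x ⟨m, h⟩ else 0) j)^2) := by
  set X : ℕ → ℝ := fun m => if h : m < n then x ⟨m, h⟩ else 0 with hX
  obtain ⟨hmono, h0, h1, heq⟩ := hx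
  have hXval : ∀ (j : Fin n), X j.val = x j := by
    intro j
    simp only [hX, dif_pos j.isLt]
  refine ⟨?_, ?_, ?_, ?_⟩
  · intro i j hij hjn
    have : X i = x ⟨i, by omega⟩ := hXval ⟨i, by omega⟩
    rw [this, hXval ⟨j, hjn⟩]
    exact hmono (by simp [Fin.lt_def, hij])
  · rw [hXval ⟨0, by omega⟩]
    exact h0 _ rfl
  · rw [hXval ⟨n-1, by omega⟩]
    exact h1 _ rfl
  · intro k hk1 hk2
    have hkn : k < n := by omega
    have := heq ⟨k, hkn⟩ hk1 hk2
    have hL : (∑ j ∈ Finset.univ.filter (fun j => j < (⟨k, hkn⟩ : Fin n)),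
        1 / (x ⟨k, hkn⟩ - x j) ^ 2) = ∑ j ∈ Finset.range k, 1/(X k - X j)^2 := by
      rw [show (∑ j ∈ Finset.univ.filter (fun j => j < (⟨k, hkn⟩ : Fin n)),
          1 / (x ⟨k, hkn⟩ - x j) ^ 2)
        = ∑ j ∈ Finset.univ.filter (fun j => j < (⟨k, hkn⟩ : Fin n)),
          (fun m => 1/(X k - X m)^2) j.val from
        Finset.sum_congr rfl fun j _ => by
          simp only
          rw [hXval j, show X k = x ⟨k, hkn⟩ from hXval ⟨k, hkn⟩]]
      simpa only [Fin.val_mk] using needle_filter_lt n ⟨k, hkn⟩ (fun m => 1/(X k - X m)^2)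
    have hR : (∑ j ∈ Finset.univ.filter (fun j => (⟨k, hkn⟩ : Fin n) < j),
        1 / (x ⟨k, hkn⟩ - x j) ^ 2) = ∑ j ∈ Finset.Ico (k+1) n, 1/(X k - X j)^2 := by
      rw [show (∑ j ∈ Finset.univ.filter (fun j => (⟨k, hkn⟩ : Fin n) < j),
          1 / (x ⟨k, hkn⟩ - x j) ^ 2)
        = ∑ j ∈ Finset.univ.filter (fun j => (⟨k, hkn⟩ : Fin n) < j),
          (fun m => 1/(X k - X m)^2) j.val from
        Finset.sum_congr rfl fun j _ => by
          simp only
          rw [hXval j, show X k = x ⟨k, hkn⟩ from hXval ⟨k, hkn⟩]]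
      simpa only [Fin.val_mk] using needle_filter_gt n ⟨k, hkn⟩ (fun m => 1/(X k - X m)^2)
    rw [hL, hR] at this
    exact this

/-- Interlacing of equilibria: if `x_1 < ⋯ < x_n` is the configuration of `n` charges at
equilibrium on `[0,1]` and `y_1 < ⋯ < y_{n+1}` that of `n+1` charges, then for every `k`
with `2 ≤ k ≤ n` one has `x_{k-1} < y_k < x_k` (1-indexed; below the index `k - 2`
corresponds to `x_{k-1}`, `k - 1` to `y_k` and `x_k`). -/
theorem needleEquilibrium_interlacing (n : ℕ) (hn : 3 ≤ n)
    (x : Fin n → ℝ) (y : Fin (n + 1) → ℝ)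
    (hx : needleEquilibrium n x) (hy : needleEquilibrium (n + 1) y)
    (k : ℕ) (hk2 : 2 ≤ k) (hkn : k ≤ n) :
    x ⟨k - 2, by omega⟩ < y ⟨k - 1, by omega⟩ ∧
      y ⟨k - 1, by omega⟩ < x ⟨k - 1, by omega⟩ := by
  obtain ⟨monX, X0, Xtop, eqX⟩ := needle_nat_data n hn x hx
  obtain ⟨monY, Y0, Ytop, eqY⟩ := needle_nat_data (n+1) (by omega) y hy
  set X : ℕ → ℝ := fun m => if h : m < n then x ⟨m, h⟩ else 0 with hX
  set Y : ℕ → ℝ := fun m => if h : m < n + 1 then y ⟨m, h⟩ else 0 with hY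
  rw [show n + 1 - 1 = n from by omega] at Ytop
  have eqY' : ∀ m, 1 ≤ m → m ≤ n - 1 →
      ∑ j ∈ Finset.range m, 1/(Y m - Y j)^2
        = ∑ j ∈ Finset.Ico (m+1) (n+1), 1/(Y m - Y j)^2 := by
    intro m h1 h2
    exact eqY m h1 (by omega)
  have hA := needle_claim_A n hn X Y monX monY X0 Y0 Xtop Ytop eqX eqY' (k-1)
    (by omega) (by omega)
  have hB := needle_claim_B n hn X Y monX monY X0 Y0 Xtop Ytop eqX eqY' (k-2)
    (by omega)
  rw [show k - 2 + 1 = k - 1 from by omega] at hB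
  have ex1 : X (k-2) = x ⟨k-2, by omega⟩ := by simp only [hX, dif_pos (show k-2 < n by omega)]
  have ex2 : X (k-1) = x ⟨k-1, by omega⟩ := by simp only [hX, dif_pos (show k-1 < n by omega)]
  have ey : Y (k-1) = y ⟨k-1, by omega⟩ := by simp only [hY, dif_pos (show k-1 < n+1 by omega)]
  rw [ex1, ey] at hB
  rw [ex2, ey] at hA
  exact ⟨hB, hA⟩
end

section
/- Let n ≥ 3 and k be integers with 2 ≤ k ≤ n−1, and let x_{k−1} < x_k < x_{k+1} < x_{k+2} be real numbers satisfying x_k − x_{k−1} > x_{k+1} − x_k > x_{k+2} − x_{k+1}. Define y_k = ((k−1)·x_{k−1} + (n+1−k)·x_k)/n, y_{k+1} = (k·x_k + (n−k)·x_{k+1})/n, and y_{k+2} = ((k+1)·x_{k+1} + (n−k−1)·x_{k+2})/n. Then y_{k+1} − y_k > y_{k+2} − y_{k+1}. -/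
/-- Let `n ≥ 3` and `2 ≤ k ≤ n-1` be integers, and let `x_{k-1} < x_k < x_{k+1} < x_{k+2}`
be reals with `x_k - x_{k-1} > x_{k+1} - x_k > x_{k+2} - x_{k+1}`. With
`y_k = ((k-1)x_{k-1} + (n+1-k)x_k)/n`, `y_{k+1} = (k x_k + (n-k)x_{k+1})/n`,
`y_{k+2} = ((k+1)x_{k+1} + (n-k-1)x_{k+2})/n`, one has `y_{k+1} - y_k > y_{k+2} - y_{k+1}`. -/
theorem gap_monotone_after_adding_charge (n k : ℕ) (hn : 3 ≤ n) (hk2 : 2 ≤ k)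
    (hkn : k ≤ n - 1) (xkm1 xk xk1 xk2 : ℝ)
    (hx1 : xkm1 < xk) (hx2 : xk < xk1) (hx3 : xk1 < xk2)
    (hgap1 : xk - xkm1 > xk1 - xk) (hgap2 : xk1 - xk > xk2 - xk1) :
    (((k : ℝ) * xk + ((n : ℝ) - k) * xk1) / n -
        (((k : ℝ) - 1) * xkm1 + ((n : ℝ) + 1 - k) * xk) / n) >
      ((((k : ℝ) + 1) * xk1 + ((n : ℝ) - k - 1) * xk2) / n -
        ((k : ℝ) * xk + ((n : ℝ) - k) * xk1) / n) := by
  have hn0 : (0:ℝ) < n := by positivity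
  have hk1 : k + 1 ≤ n := by omega
  have hkr : (k:ℝ) + 1 ≤ n := by exact_mod_cast hk1
  have hkr2 : (2:ℝ) ≤ k := by exact_mod_cast hk2
  rw [gt_iff_lt, div_sub_div_same, div_sub_div_same, div_lt_div_iff₀ hn0 hn0]
  nlinarith [mul_pos (sub_pos.2 hgap1) (by linarith : (0:ℝ) < (k:ℝ) - 1),
    mul_nonneg (sub_pos.2 hgap2).le (by linarith : (0:ℝ) ≤ (n:ℝ) - k - 1)]
end

section
/- For each n ≥ 3 let x^{(n)}_1 < ⋯ < x^{(n)}_n be the configuration of n charges at equilibrium on [0,1], and define the distribution function F_n : ℝ → ℝ by F_n(t) = (1/n)·card{i : x^{(n)}_i ≤ t}. Then the sequence (F_n) converges uniformly on [0,1] to the distribution function G(t) = t of the uniform density; in particular F_n(t) → t for every t ∈ [0,1]. -/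
section NeedleAux

set_option maxHeartbeats 1000000

open Finset

private lemma needle_triangle_shift (n : ℕ) (f : ℕ → ℕ → ℝ) :
    ∑ j ∈ range n, ∑ i ∈ range j, f i j
      = ∑ k ∈ Ico 1 n, ∑ i ∈ range (n - k), f i (i + k) := by
  rw [Finset.sum_sigma', Finset.sum_sigma']
  refine Finset.sum_nbij' (fun p => ⟨p.1 - p.2, p.2⟩) (fun q => ⟨q.2 + q.1, q.2⟩) ?_ ?_ ?_ ?_ ?_
  · rintro ⟨a, b⟩ h
    simp only [Finset.mem_sigma, Finset.mem_range, Finset.mem_Ico] at *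
    omega
  · rintro ⟨a, b⟩ h
    simp only [Finset.mem_sigma, Finset.mem_range, Finset.mem_Ico] at *
    omega
  · rintro ⟨a, b⟩ h
    simp only [Finset.mem_sigma, Finset.mem_range] at h
    simp only [Sigma.mk.inj_iff]
    constructor
    · omega
    · exact heq_of_eq rfl
  · rintro ⟨a, b⟩ h
    simp only [Finset.mem_sigma, Finset.mem_range, Finset.mem_Ico] at h
    simp only [Sigma.mk.inj_iff]
    constructor
    · omega
    · exact heq_of_eq rfl
  · rintro ⟨a, b⟩ h
    simp only [Finset.mem_sigma, Finset.mem_range] at h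
    simp only []
    congr 1
    omega

private lemma needle_triangle_swap (n : ℕ) (f : ℕ → ℕ → ℝ) :
    ∑ j ∈ range n, ∑ i ∈ range j, f i j = ∑ i ∈ range n, ∑ j ∈ Ico (i+1) n, f i j := by
  rw [Finset.sum_sigma', Finset.sum_sigma']
  refine Finset.sum_nbij' (fun p => ⟨p.2, p.1⟩) (fun q => ⟨q.2, q.1⟩) ?_ ?_ ?_ ?_ ?_
  · rintro ⟨a, b⟩ h
    simp only [Finset.mem_sigma, Finset.mem_range, Finset.mem_Ico] at *
    omega
  · rintro ⟨a, b⟩ h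
    simp only [Finset.mem_sigma, Finset.mem_range, Finset.mem_Ico] at *
    omega
  · rintro ⟨a, b⟩ _; rfl
  · rintro ⟨a, b⟩ _; rfl
  · rintro ⟨a, b⟩ _; rfl

private lemma needle_cs_recip (s : Finset ℕ) (a : ℕ → ℝ) (ha : ∀ i ∈ s, 0 < a i) {S : ℝ} (hS : 0 < S)
    (hsum : ∑ i ∈ s, a i ≤ S) : (s.card : ℝ)^2 / S ≤ ∑ i ∈ s, 1 / a i := by
  have hnn : 0 ≤ ∑ i ∈ s, 1 / a i :=
    Finset.sum_nonneg fun i hi => le_of_lt (by have := ha i hi; positivity)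
  have cs := Finset.sum_mul_sq_le_sq_mul_sq s (fun i => Real.sqrt (a i)) (fun i => 1/Real.sqrt (a i))
  have e1 : ∑ i ∈ s, Real.sqrt (a i) * (1/Real.sqrt (a i)) = (s.card : ℝ) := by
    rw [Finset.sum_congr rfl (fun i hi => ?_), Finset.sum_const, nsmul_eq_mul, mul_one]
    have : Real.sqrt (a i) ≠ 0 := ne_of_gt (Real.sqrt_pos.mpr (ha i hi))
    field_simp
  have e2 : ∀ i ∈ s, Real.sqrt (a i) ^ 2 = a i := fun i hi => Real.sq_sqrt (le_of_lt (ha i hi))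
  have e3 : ∀ i ∈ s, (1/Real.sqrt (a i)) ^ 2 = 1 / a i := fun i hi => by
    rw [div_pow, one_pow, Real.sq_sqrt (le_of_lt (ha i hi))]
  rw [e1, Finset.sum_congr rfl e2, Finset.sum_congr rfl e3] at cs
  rw [div_le_iff₀ hS]
  calc (s.card : ℝ)^2 ≤ (∑ i ∈ s, a i) * ∑ i ∈ s, 1 / a i := cs
    _ ≤ S * ∑ i ∈ s, 1/a i := mul_le_mul_of_nonneg_right hsum hnn
    _ = (∑ i ∈ s, 1/a i) * S := mul_comm _ _

private lemma needle_telescope {n : ℕ} {X : ℕ → ℝ} (hmono : ∀ i j, i < j → j < n → X i < X j)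
    {a b k : ℕ} (hk : 1 ≤ k) (hab : a < b) (hbk : b + k ≤ n) :
    ∑ i ∈ Ico a b, (X (i + k) - X i) ≤ (k : ℝ) * (X (b + k - 1) - X a) := by
  have step : ∀ i : ℕ, X (i + k) - X i = ∑ j ∈ range k, (X (i + j + 1) - X (i + j)) :=
    fun i => (Finset.sum_range_sub (fun j => X (i + j)) k).symm
  rw [Finset.sum_congr rfl (fun i _ => step i), Finset.sum_comm]
  have inner : ∀ j ∈ range k, (∑ i ∈ Ico a b, (X (i + j + 1) - X (i + j)))
      ≤ X (b + k - 1) - X a := by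
    intro j hj
    rw [mem_range] at hj
    have e1 : ∑ i ∈ Ico a b, (X (i + j + 1) - X (i + j)) = ∑ m ∈ Ico (a+j) (b+j), (X (m+1) - X m) := by
      rw [Finset.sum_Ico_eq_sum_range, Finset.sum_Ico_eq_sum_range]
      refine Finset.sum_congr (by congr 1; omega) (fun i _ => ?_)
      congr 2 <;> omega
    rw [e1]
    have subs : Ico (a+j) (b+j) ⊆ Ico a (b+k-1) := by
      intro m hm; rw [mem_Ico] at *; omega
    have nonneg : ∀ m ∈ Ico a (b+k-1), m ∉ Ico (a+j) (b+j) → 0 ≤ X (m+1) - X m := by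
      intro m hm _
      rw [mem_Ico] at hm
      have := hmono m (m+1) (by omega) (by omega)
      linarith
    calc ∑ m ∈ Ico (a+j) (b+j), (X (m+1) - X m)
        ≤ ∑ m ∈ Ico a (b+k-1), (X (m+1) - X m) :=
          Finset.sum_le_sum_of_subset_of_nonneg subs nonneg
      _ = X (b+k-1) - X a := by
          rw [Finset.sum_Ico_eq_sum_range]
          have h2 := Finset.sum_range_sub (fun m => X (a + m)) (b + k - 1 - a)
          refine Eq.trans (Eq.trans ?_ h2) ?_
          · refine Finset.sum_congr rfl (fun i _ => ?_)
            congr 2 <;> omega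
          · congr 2 <;> omega
  calc ∑ j ∈ range k, ∑ i ∈ Ico a b, (X (i + j + 1) - X (i + j))
      ≤ ∑ j ∈ range k, (X (b + k - 1) - X a) := Finset.sum_le_sum inner
    _ = (k:ℝ) * (X (b + k - 1) - X a) := by rw [Finset.sum_const, card_range, nsmul_eq_mul]

private lemma needle_dcl {s : Finset ℕ} (hsub : ∀ i ∈ s, ∀ j, j < i → j ∈ s) :
    s = range s.card := by
  rcases s.eq_empty_or_nonempty with h | h
  · rw [h]; simp
  · have key : s = range (s.max' h + 1) := by
      ext i
      rw [mem_range]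
      constructor
      · intro hi; exact Nat.lt_succ_of_le (s.le_max' i hi)
      · intro hi
        rcases Nat.lt_succ_iff_lt_or_eq.mp hi with h' | h'
        · exact hsub _ (s.max'_mem h) i h'
        · rw [h']; exact s.max'_mem h
    rw [key, card_range]

private lemma needle_downclosed {n : ℕ} {X : ℕ → ℝ} (hmono : ∀ i j, i < j → j < n → X i < X j)
    (t : ℝ) : (range n).filter (fun i => X i ≤ t)
      = range (((range n).filter (fun i => X i ≤ t)).card) := by
  refine needle_dcl (fun i hi j hj => ?_)
  rw [mem_filter, mem_range] at hi ⊢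
  exact ⟨lt_trans hj hi.1, le_of_lt (lt_of_lt_of_le (hmono j i hj hi.1) hi.2)⟩

private lemma needle_recip_lin {p q : ℝ} (hp : 0 < p) (hq : 0 < q) :
    1/p - (q - p)/p^2 ≤ 1/q := by
  have h : 1/q - (1/p - (q - p)/p^2) = (q-p)^2/(q*p^2) := by field_simp; ring
  nlinarith [sq_nonneg (q-p), mul_pos hq (mul_pos hp hp), div_nonneg (sq_nonneg (q-p)) (le_of_lt (mul_pos hq (pow_pos hp 2)))]

private lemma needle_energy_le {n : ℕ} {X : ℕ → ℝ} (hn : 3 ≤ n)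
    (hmono : ∀ i j, i < j → j < n → X i < X j)
    (hX0 : X 0 = 0) (hXl : X (n-1) = 1)
    (hbal : ∀ m, 1 ≤ m → m ≤ n - 2 →
      (∑ i ∈ range m, 1/(X m - X i)^2) = ∑ j ∈ Ico (m+1) n, 1/(X j - X m)^2)
    {Y : ℕ → ℝ} (hY : ∀ i j, i < j → j < n → Y i < Y j) (hY0 : Y 0 = 0) (hYl : Y (n-1) = 1) :
    ∑ j ∈ range n, ∑ i ∈ range j, 1/(X j - X i)
      ≤ ∑ j ∈ range n, ∑ i ∈ range j, 1/(Y j - Y i) := by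
  -- the linearization sum is zero
  have hZ : ∑ j ∈ range n, ∑ i ∈ range j, ((Y j - X j) - (Y i - X i))/(X j - X i)^2 = 0 := by
    have split : ∑ j ∈ range n, ∑ i ∈ range j, ((Y j - X j) - (Y i - X i))/(X j - X i)^2
        = (∑ j ∈ range n, (Y j - X j) * ∑ i ∈ range j, 1/(X j - X i)^2)
          - ∑ j ∈ range n, ∑ i ∈ range j, (Y i - X i) * (1/(X j - X i)^2) := by
      rw [← Finset.sum_sub_distrib]
      refine Finset.sum_congr rfl (fun j _ => ?_)
      rw [Finset.mul_sum, ← Finset.sum_sub_distrib]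
      refine Finset.sum_congr rfl (fun i _ => ?_)
      ring
    rw [split, needle_triangle_swap n (fun i j => (Y i - X i) * (1/(X j - X i)^2))]
    have e2 : ∑ i ∈ range n, ∑ j ∈ Ico (i+1) n, (Y i - X i) * (1/(X j - X i)^2)
        = ∑ i ∈ range n, (Y i - X i) * ∑ j ∈ Ico (i+1) n, 1/(X j - X i)^2 := by
      refine Finset.sum_congr rfl (fun i _ => ?_)
      rw [Finset.mul_sum]
    rw [e2, ← Finset.sum_sub_distrib]
    refine Finset.sum_eq_zero (fun m hm => ?_)
    rw [mem_range] at hm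
    rcases eq_or_ne m 0 with rfl | hm0
    · rw [hY0, hX0]; ring
    rcases eq_or_ne m (n-1) with rfl | hml
    · rw [hYl, hXl]; ring
    · rw [hbal m (by omega) (by omega)]; ring
  have key : ∀ j ∈ range n, ∀ i ∈ range j,
      1/(X j - X i) - ((Y j - X j) - (Y i - X i))/(X j - X i)^2 ≤ 1/(Y j - Y i) := by
    intro j hj i hi
    rw [mem_range] at hj hi
    have hp : 0 < X j - X i := sub_pos.mpr (hmono i j hi hj)
    have hq : 0 < Y j - Y i := sub_pos.mpr (hY i j hi hj)
    have := needle_recip_lin hp hq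
    have e : (Y j - Y i) - (X j - X i) = (Y j - X j) - (Y i - X i) := by ring
    rw [e] at this
    exact this
  calc ∑ j ∈ range n, ∑ i ∈ range j, 1/(X j - X i)
      = ∑ j ∈ range n, ∑ i ∈ range j,
          (1/(X j - X i) - ((Y j - X j) - (Y i - X i))/(X j - X i)^2) := by
        rw [Finset.sum_congr rfl (fun j _ => Finset.sum_sub_distrib _ _),
          Finset.sum_sub_distrib, hZ, sub_zero]
    _ ≤ ∑ j ∈ range n, ∑ i ∈ range j, 1/(Y j - Y i) :=
        Finset.sum_le_sum (fun j hj => Finset.sum_le_sum (fun i hi => key j hj i hi))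

private lemma needle_block_lb {n : ℕ} {X : ℕ → ℝ} (hmono : ∀ i j, i < j → j < n → X i < X j)
    {a b k : ℕ} (hk : 1 ≤ k) (hbk : b + k ≤ n) (hab : a ≤ b)
    {S : ℝ} (hS : 0 < S) (hXS : a < b → X (b+k-1) - X a ≤ S) :
    ((b - a : ℕ):ℝ)^2 / ((k:ℝ) * S) ≤ ∑ i ∈ Ico a b, 1/(X (i+k) - X i) := by
  rcases eq_or_lt_of_le hab with rfl | hab'
  · simp
  · have hpos : ∀ i ∈ Ico a b, 0 < X (i+k) - X i := by
      intro i hi; rw [mem_Ico] at hi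
      have := hmono i (i+k) (by omega) (by omega)
      linarith
    have hk0 : (0:ℝ) < (k:ℝ) := by exact_mod_cast hk
    have hkS : 0 < (k:ℝ) * S := mul_pos hk0 hS
    have hsum : ∑ i ∈ Ico a b, (X (i+k) - X i) ≤ (k:ℝ) * S :=
      le_trans (needle_telescope hmono hk hab' hbk)
        (mul_le_mul_of_nonneg_left (hXS hab') (le_of_lt hk0))
    have := needle_cs_recip (Ico a b) (fun i => X (i+k) - X i) hpos hkS hsum
    rwa [Nat.card_Ico] at this

private lemma needle_upper {n : ℕ} {X : ℕ → ℝ} (hn : 3 ≤ n)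
    (hmono : ∀ i j, i < j → j < n → X i < X j)
    (hX0 : X 0 = 0) (hXl : X (n-1) = 1)
    (hbal : ∀ m, 1 ≤ m → m ≤ n - 2 →
      (∑ i ∈ range m, 1/(X m - X i)^2) = ∑ j ∈ Ico (m+1) n, 1/(X j - X m)^2) :
    ∑ k ∈ Ico 1 n, ∑ i ∈ range (n - k), 1/(X (i+k) - X i)
      ≤ ∑ k ∈ Ico 1 n, ((n - k : ℕ) : ℝ) * (((n:ℝ) - 1) / k) := by
  have hn1 : (0:ℝ) < (n:ℝ) - 1 := by
    have : (3:ℝ) ≤ (n:ℝ) := by exact_mod_cast hn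
    linarith
  set Y : ℕ → ℝ := fun m => (m : ℝ) / ((n:ℝ) - 1) with hYdef
  have hY : ∀ i j, i < j → j < n → Y i < Y j := fun i j hij _ => by
    have : (i:ℝ) < (j:ℝ) := by exact_mod_cast hij
    exact div_lt_div_of_pos_right this hn1 |>.trans_le le_rfl
  have hY0 : Y 0 = 0 := by simp [hYdef]
  have hYl : Y (n-1) = 1 := by
    rw [hYdef]
    simp only []
    rw [Nat.cast_sub (by omega)]
    simp only [Nat.cast_one]
    exact div_self (ne_of_gt hn1)
  calc ∑ k ∈ Ico 1 n, ∑ i ∈ range (n - k), 1/(X (i+k) - X i)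
      = ∑ j ∈ range n, ∑ i ∈ range j, 1/(X j - X i) :=
        (needle_triangle_shift n (fun i j => 1/(X j - X i))).symm
    _ ≤ ∑ j ∈ range n, ∑ i ∈ range j, 1/(Y j - Y i) :=
        needle_energy_le hn hmono hX0 hXl hbal hY hY0 hYl
    _ = ∑ k ∈ Ico 1 n, ∑ i ∈ range (n - k), 1/(Y (i+k) - Y i) :=
        needle_triangle_shift n (fun i j => 1/(Y j - Y i))
    _ = ∑ k ∈ Ico 1 n, ((n - k : ℕ) : ℝ) * (((n:ℝ) - 1) / k) := by
        refine Finset.sum_congr rfl (fun k hk => ?_)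
        rw [mem_Ico] at hk
        have hk0 : (0:ℝ) < (k:ℝ) := by exact_mod_cast hk.1
        have inner : ∀ i ∈ range (n - k), 1/(Y (i+k) - Y i) = ((n:ℝ) - 1) / k := by
          intro i _
          rw [hYdef]
          simp only []
          rw [div_sub_div_same]
          have : ((i+k : ℕ) : ℝ) - (i:ℝ) = (k:ℝ) := by push_cast; ring
          rw [this, one_div_div]
        rw [Finset.sum_congr rfl inner, Finset.sum_const, card_range, nsmul_eq_mul]

private lemma needle_convert {n : ℕ} {x : Fin n → ℝ} (hn : 3 ≤ n) (h : needleEquilibrium n x) :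
    ∃ X : ℕ → ℝ,
      (∀ i j, i < j → j < n → X i < X j) ∧ X 0 = 0 ∧ X (n-1) = 1 ∧
      (∀ m, 1 ≤ m → m ≤ n - 2 →
        (∑ i ∈ range m, 1/(X m - X i)^2) = ∑ j ∈ Ico (m+1) n, 1/(X j - X m)^2) ∧
      (∀ t : ℝ, (Finset.univ.filter fun i : Fin n => x i ≤ t).card
        = ((range n).filter fun i => X i ≤ t).card) := by
  obtain ⟨hmono, h0, hl, hbal⟩ := h
  set X : ℕ → ℝ := fun i => if h : i < n then x ⟨i, h⟩ else 0 with hX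
  have hXv : ∀ i (h : i < n), X i = x ⟨i, h⟩ := fun i h => dif_pos h
  refine ⟨X, ?_, ?_, ?_, ?_, ?_⟩
  · intro i j hij hjn
    rw [hXv i (lt_trans hij hjn), hXv j hjn]
    exact hmono (Fin.mk_lt_mk.mpr hij)
  · rw [hXv 0 (by omega)]
    exact h0 ⟨0, by omega⟩ rfl
  · rw [hXv (n-1) (by omega)]
    exact hl ⟨n-1, by omega⟩ rfl
  · intro m hm1 hm2
    have hmn : m < n := by omega
    have hb := hbal ⟨m, hmn⟩ hm1 hm2
    have eL : ∑ j ∈ Finset.univ.filter (fun j => j < (⟨m, hmn⟩ : Fin n)), 1 / (x ⟨m, hmn⟩ - x j) ^ 2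
        = ∑ i ∈ range m, 1/(X m - X i)^2 := by
      refine Finset.sum_bij' (fun j _ => (j : Fin n).val) (fun i hi => ⟨i, by
        rw [mem_range] at hi; omega⟩) ?_ ?_ ?_ ?_ ?_
      · intro j hj
        rw [mem_filter] at hj
        rw [mem_range]
        exact hj.2
      · intro i hi
        rw [mem_range] at hi
        rw [mem_filter]
        exact ⟨mem_univ _, Fin.mk_lt_mk.mpr hi⟩
      · intro j _; exact Fin.eta _ _
      · intro i _; rfl
      · intro j hj
        rw [hXv m hmn, hXv (j : Fin n).val j.isLt]
    have eR : ∑ j ∈ Finset.univ.filter (fun j => (⟨m, hmn⟩ : Fin n) < j), 1 / (x ⟨m, hmn⟩ - x j) ^ 2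
        = ∑ j ∈ Ico (m+1) n, 1/(X j - X m)^2 := by
      refine Finset.sum_bij' (fun j _ => (j : Fin n).val) (fun j hj => ⟨j, by
        rw [mem_Ico] at hj; omega⟩) ?_ ?_ ?_ ?_ ?_
      · intro j hj
        rw [mem_filter] at hj
        rw [mem_Ico]
        exact ⟨Fin.mk_lt_mk.mp hj.2, j.isLt⟩
      · intro j hj
        rw [mem_Ico] at hj
        rw [mem_filter]
        exact ⟨mem_univ _, Fin.mk_lt_mk.mpr hj.1⟩
      · intro j _; exact Fin.eta _ _
      · intro j _; rfl
      · intro j hj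
        rw [hXv m hmn, hXv (j : Fin n).val j.isLt]
        have e : ∀ a b : ℝ, (a - b)^2 = (b - a)^2 := fun a b => by ring
        rw [e]
    rw [eL, eR] at hb
    exact hb
  · intro t
    refine Finset.card_bij' (fun (j : Fin n) _ => j.val) (fun i hi => ⟨i, by
      rw [mem_filter, mem_range] at hi; exact hi.1⟩) ?_ ?_ ?_ ?_
    · intro j hj
      rw [mem_filter] at hj
      rw [mem_filter, mem_range]
      refine ⟨j.isLt, ?_⟩
      rw [hXv j.val j.isLt]
      exact hj.2
    · intro i hi
      rw [mem_filter, mem_range] at hi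
      rw [mem_filter]
      refine ⟨mem_univ _, ?_⟩
      rw [hXv i hi.1] at hi
      exact hi.2
    · intro j _; exact Fin.eta _ _
    · intro i _; rfl

private lemma needle_scalar_lb {t u v w : ℝ} (ht0 : 0 < t) (ht1 : t < 1) (hw : 0 ≤ w)
    (hkey : w ≤ (u - t*(u+v))^2) : (u+v)^2 + 4*w ≤ u^2/t + v^2/(1-t) := by
  have h1 : 0 < t*(1-t) := by nlinarith
  have ht : t ≠ 0 := ne_of_gt ht0
  have h1t : 1 - t ≠ 0 := by intro h; rw [sub_eq_zero] at h; exact absurd h.symm (ne_of_lt ht1)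
  have key : u^2/t + v^2/(1-t) - (u+v)^2 = (u - t*(u+v))^2/(t*(1-t)) := by
    field_simp; ring
  have h2 : t*(1-t) ≤ 1/4 := by nlinarith [sq_nonneg (t - 1/2)]
  have h3 : 4*w ≤ (u - t*(u+v))^2/(t*(1-t)) := by
    rw [le_div_iff₀ h1]; nlinarith
  linarith

private lemma needle_main {n : ℕ} {X : ℕ → ℝ} (hn : 3 ≤ n)
    (hmono : ∀ i j, i < j → j < n → X i < X j)
    (hX0 : X 0 = 0) (hXl : X (n-1) = 1)
    (hbal : ∀ m, 1 ≤ m → m ≤ n - 2 →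
      (∑ i ∈ range m, 1/(X m - X i)^2) = ∑ j ∈ Ico (m+1) n, 1/(X j - X m)^2)
    {ε t : ℝ} (hε0 : 0 < ε) (hε1 : ε ≤ 1) (ht0 : 0 < t) (ht1 : t < 1)
    {K : ℕ} (hK1 : 1 ≤ K) (hKε : (K:ℝ) ≤ ε * n / 4) (hKn : K + 1 ≤ n)
    (hH : 2/ε^2 < ∑ k ∈ Icc 1 K, 1/(k:ℝ)) :
    |(((range n).filter (fun i => X i ≤ t)).card : ℝ)/n - t| < ε := by
  by_contra hcon
  push_neg at hcon
  set N := ((range n).filter (fun i => X i ≤ t)).card with hNdef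
  have hn0 : (0:ℝ) < n := by positivity
  have hn3 : (3:ℝ) ≤ (n:ℝ) := by exact_mod_cast hn
  have hmem : ∀ i, i < n → (X i ≤ t ↔ i < N) := by
    intro i hi
    constructor
    · intro hXi
      have h2 : i ∈ (range n).filter (fun i => X i ≤ t) :=
        mem_filter.mpr ⟨mem_range.mpr hi, hXi⟩
      rw [needle_downclosed hmono t, mem_range] at h2
      exact h2
    · intro hiN
      have h2 : i ∈ range N := mem_range.mpr hiN
      rw [hNdef, ← needle_downclosed hmono t, mem_filter] at h2
      exact h2.2
  have hNn : N ≤ n := le_trans (card_filter_le _ _) (le_of_eq (card_range n))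
  set T : ℕ → ℝ := fun k => ∑ i ∈ range (n - k), 1/(X (i+k) - X i) with hT
  -- per-shift lower bound for small shifts
  have hper : ∀ k ∈ Icc 1 K, (((n:ℝ) - 2*k)^2 + ε^2*(n:ℝ)^2)/k ≤ T k := by
    intro k hk
    rw [mem_Icc] at hk
    have hk1 : 1 ≤ k := hk.1
    have hkK : k ≤ K := hk.2
    have hk0 : (0:ℝ) < (k:ℝ) := by exact_mod_cast hk1
    have hkR : (k:ℝ) ≤ ε * n / 4 := le_trans (by exact_mod_cast hkK) hKε
    have h4k : 4*k ≤ n := by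
      have h1 : 4*(k:ℝ) ≤ ε * n := by linarith
      have h2 : 4*(k:ℝ) ≤ (n:ℝ) := le_trans h1 (by nlinarith)
      exact_mod_cast h2
    have hkn : k ≤ n := by omega
    -- block A
    have hA : ((N - k : ℕ):ℝ)^2/((k:ℝ)*t) ≤ ∑ i ∈ Ico 0 (N-k), 1/(X (i+k) - X i) := by
      refine needle_block_lb (a := 0) (b := N - k) (k := k) (S := t) hmono hk1
        (by omega) (Nat.zero_le _) ht0 (fun hab => ?_)
      have e : N-k+k-1 = N-1 := by omega
      rw [e, hX0, sub_zero]
      exact (hmem (N-1) (by omega)).mpr (by omega)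
    -- block B
    have hB : (((n-k) - N : ℕ):ℝ)^2/((k:ℝ)*(1-t)) ≤ ∑ i ∈ Ico N (n-k), 1/(X (i+k) - X i) := by
      rcases le_or_gt N (n-k) with hNnk | hNnk
      · refine needle_block_lb (a := N) (b := n - k) (k := k) (S := 1 - t) hmono hk1
          (by omega) hNnk (by linarith) (fun hab => ?_)
        have e : n-k+k-1 = n-1 := by omega
        rw [e, hXl]
        have hNn' : N < n := by omega
        have h2 : ¬ (X N ≤ t) := by rw [hmem N hNn']; omega
        linarith [not_le.mp h2]
      · have e1 : (n-k) - N = 0 := by omega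
        have e2 : Ico N (n-k) = (∅ : Finset ℕ) := Ico_eq_empty (by omega)
        rw [e1, e2]
        simp
    -- combining the blocks into T k
    have hAB : (∑ i ∈ Ico 0 (N-k), 1/(X (i+k) - X i))
        + (∑ i ∈ Ico N (n-k), 1/(X (i+k) - X i)) ≤ T k := by
      have hdisj : Disjoint (Ico 0 (N-k)) (Ico N (n-k)) := by
        rw [Finset.disjoint_left]
        intro i hi1 hi2
        rw [mem_Ico] at hi1 hi2
        omega
      rw [← Finset.sum_union hdisj, hT]
      simp only [range_eq_Ico]
      refine Finset.sum_le_sum_of_subset_of_nonneg ?_ ?_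
      · intro i hi
        rw [mem_union, mem_Ico, mem_Ico] at hi
        rw [mem_Ico]
        omega
      · intro i hi _
        rw [mem_Ico] at hi
        have h2 := hmono i (i+k) (by omega) (by omega)
        have h3 : 0 < X (i+k) - X i := by linarith
        positivity
    set u := ((N - k : ℕ):ℝ) with hu
    set v := (((n-k) - N : ℕ):ℝ) with hv
    have hu0 : (0:ℝ) ≤ u := Nat.cast_nonneg _
    have hv0 : (0:ℝ) ≤ v := Nat.cast_nonneg _
    have huv_le : u + v ≤ (n:ℝ) := by
      have h1 : (N-k) + ((n-k)-N) ≤ n := by omega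
      rw [hu, hv, ← Nat.cast_add]
      exact_mod_cast h1
    have huv_ge : (n:ℝ) - 2*(k:ℝ) ≤ u + v := by
      have h1 : n - 2*k ≤ (N-k) + ((n-k)-N) := by omega
      have h2 : ((n - 2*k : ℕ):ℝ) ≤ u + v := by
        rw [hu, hv, ← Nat.cast_add]; exact_mod_cast h1
      rw [Nat.cast_sub (by omega)] at h2
      push_cast at h2
      linarith
    have hn2k : (0:ℝ) ≤ (n:ℝ) - 2*(k:ℝ) := by
      have h2 : ((4*k : ℕ):ℝ) ≤ (n:ℝ) := by exact_mod_cast h4k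
      push_cast at h2
      linarith
    -- the deviation forces the key inequality
    have hw : ε^2*(n:ℝ)^2/4 ≤ (u - t*(u+v))^2 := by
      have hek : (k:ℝ) ≤ ε*(n:ℝ)/4 := by linarith [hkR]
      rcases abs_cases (((N:ℝ))/n - t) with ⟨he, _⟩ | ⟨he, _⟩
      · -- positive deviation : N/n - t ≥ ε
        rw [he] at hcon
        have hNge : (t+ε)*(n:ℝ) ≤ (N:ℝ) := by
          have h1 : t + ε ≤ (N:ℝ)/n := by linarith
          calc (t+ε)*(n:ℝ) ≤ ((N:ℝ)/n)*(n:ℝ) := mul_le_mul_of_nonneg_right h1 (le_of_lt hn0)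
            _ = (N:ℝ) := by field_simp
        have hkN : k ≤ N := by
          have h2 : (k:ℝ) ≤ (N:ℝ) := by
            have h3 : (t+ε)*(n:ℝ) = t*n + ε*n := by ring
            have h4 : 0 ≤ t*(n:ℝ) := mul_nonneg (le_of_lt ht0) (le_of_lt hn0)
            linarith
          exact_mod_cast h2
        have hueq : u = (N:ℝ) - (k:ℝ) := by
          rw [hu, Nat.cast_sub hkN]
        have hlb : ε*(n:ℝ)/2 ≤ u - t*(u+v) := by
          have h1 : t*(u+v) ≤ t*(n:ℝ) := mul_le_mul_of_nonneg_left huv_le (le_of_lt ht0)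
          have h2 : (t+ε)*(n:ℝ) = t*n + ε*n := by ring
          have h3 : 0 ≤ ε*(n:ℝ) := mul_nonneg (le_of_lt hε0) (le_of_lt hn0)
          linarith
        calc ε^2*(n:ℝ)^2/4 = (ε*(n:ℝ)/2)^2 := by ring
          _ ≤ (u - t*(u+v))^2 := pow_le_pow_left₀ (by positivity) hlb 2
      · -- negative deviation : t - N/n ≥ ε
        rw [he] at hcon
        have hNle : (N:ℝ) ≤ (t-ε)*(n:ℝ) := by
          have h1 : (N:ℝ)/n ≤ t - ε := by linarith
          calc (N:ℝ) = ((N:ℝ)/n)*(n:ℝ) := by field_simp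
            _ ≤ (t-ε)*(n:ℝ) := mul_le_mul_of_nonneg_right h1 (le_of_lt hn0)
        have hu_le : u ≤ (N:ℝ) := by
          rw [hu]; exact_mod_cast Nat.sub_le N k
        have hlb : ε*(n:ℝ)/2 ≤ t*(u+v) - u := by
          have h1 : t*((n:ℝ) - 2*(k:ℝ)) ≤ t*(u+v) := mul_le_mul_of_nonneg_left huv_ge (le_of_lt ht0)
          have h2 : t*((n:ℝ) - 2*(k:ℝ)) = t*n - 2*(t*k) := by ring
          have h3 : t*(k:ℝ) ≤ (k:ℝ) := by nlinarith
          have h4 : (t-ε)*(n:ℝ) = t*n - ε*n := by ring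
          linarith
        calc ε^2*(n:ℝ)^2/4 = (ε*(n:ℝ)/2)^2 := by ring
          _ ≤ (t*(u+v) - u)^2 := pow_le_pow_left₀ (by positivity) hlb 2
          _ = (u - t*(u+v))^2 := by ring
    have hscal := needle_scalar_lb ht0 ht1 (by positivity : (0:ℝ) ≤ ε^2*(n:ℝ)^2/4) hw
    have hsq : ((n:ℝ) - 2*(k:ℝ))^2 ≤ (u+v)^2 := pow_le_pow_left₀ hn2k huv_ge 2
    have ht0' : t ≠ 0 := ne_of_gt ht0
    have ht1' : (1:ℝ) - t ≠ 0 := by intro h; rw [sub_eq_zero] at h; exact absurd h.symm (ne_of_lt ht1)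
    have hk0' : (k:ℝ) ≠ 0 := ne_of_gt hk0
    calc (((n:ℝ) - 2*k)^2 + ε^2*(n:ℝ)^2)/k
        ≤ (u^2/t + v^2/(1-t))/(k:ℝ) := by
          rw [div_le_div_iff_of_pos_right hk0]
          linarith [hscal, hsq]
      _ = u^2/((k:ℝ)*t) + v^2/((k:ℝ)*(1-t)) := by
          field_simp
      _ ≤ T k := by
          rw [hu, hv]
          linarith [hA, hB, hAB]
  -- per-shift lower bound for large shifts
  have hper2 : ∀ k ∈ Ico (K+1) n, ((n - k:ℕ):ℝ)^2/k ≤ T k := by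
    intro k hk
    rw [mem_Ico] at hk
    have hk1 : 1 ≤ k := by omega
    have hk0 : (0:ℝ) < (k:ℝ) := by exact_mod_cast hk1
    have h2 : ((n-k - 0 : ℕ):ℝ)^2/((k:ℝ)*1) ≤ ∑ i ∈ Ico 0 (n-k), 1/(X (i+k) - X i) := by
      refine needle_block_lb (a := 0) (b := n - k) (k := k) (S := 1) hmono hk1
        (by omega) (Nat.zero_le _) one_pos (fun hab => ?_)
      have e : n-k+k-1 = n-1 := by omega
      rw [e, hXl, hX0, sub_zero]
    rw [Nat.sub_zero, mul_one] at h2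
    rw [hT]
    simp only [range_eq_Ico]
    exact h2
  -- upper bound from energy minimality
  have hub := needle_upper hn hmono hX0 hXl hbal
  rw [show (∑ k ∈ Ico 1 n, ∑ i ∈ range (n - k), 1/(X (i+k) - X i)) = ∑ k ∈ Ico 1 n, T k from rfl] at hub
  -- split the shift range
  have hsplit : ∀ f : ℕ → ℝ, ∑ k ∈ Ico 1 n, f k = ∑ k ∈ Icc 1 K, f k + ∑ k ∈ Ico (K+1) n, f k := by
    intro f
    rw [← Finset.sum_Ico_consecutive f (by omega : 1 ≤ K+1) hKn, Finset.Ico_add_one_right_eq_Icc]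
  set W : ℕ → ℝ := fun k => ((n - k : ℕ) : ℝ) * (((n:ℝ) - 1) / k) with hW
  have hL1 : ∀ k ∈ Icc 1 K, W k + (ε^2*(n:ℝ)^2 * (1/(k:ℝ)) - 3*(n:ℝ)) ≤ T k := by
    intro k hk
    have hper' := hper k hk
    rw [mem_Icc] at hk
    have hk0 : (0:ℝ) < (k:ℝ) := by exact_mod_cast hk.1
    have hk1R : (1:ℝ) ≤ (k:ℝ) := by exact_mod_cast hk.1
    have hknn : k < n := by omega
    have hknR : (k:ℝ) ≤ (n:ℝ) := by exact_mod_cast le_of_lt hknn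
    have hcast : ((n-k:ℕ):ℝ) = (n:ℝ) - k := by
      rw [Nat.cast_sub (le_of_lt hknn)]
    have hk0' : (k:ℝ) ≠ 0 := ne_of_gt hk0
    have key : W k + (ε^2*(n:ℝ)^2*(1/(k:ℝ)) - 3*(n:ℝ))
        ≤ (((n:ℝ) - 2*k)^2 + ε^2*(n:ℝ)^2)/k := by
      rw [hW]
      simp only []
      rw [hcast, ← sub_nonneg]
      have expand : (((n:ℝ) - 2*k)^2 + ε^2*(n:ℝ)^2)/k
          - (((n:ℝ)-k) * (((n:ℝ)-1)/k) + (ε^2*(n:ℝ)^2*(1/(k:ℝ)) - 3*(n:ℝ)))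
          = (((n:ℝ)-2*k)^2 - ((n:ℝ)-k)*((n:ℝ)-1) + 3*(n:ℝ)*k)/k := by
        field_simp
        ring
      rw [expand]
      apply div_nonneg _ (le_of_lt hk0)
      nlinarith [hk1R, hknR, hn3]
    linarith
  have hL2 : ∀ k ∈ Ico (K+1) n, W k - (n:ℝ) ≤ T k := by
    intro k hk
    have hper' := hper2 k hk
    rw [mem_Ico] at hk
    have hk1 : 1 ≤ k := by omega
    have hk0 : (0:ℝ) < (k:ℝ) := by exact_mod_cast hk1
    have hk1R : (1:ℝ) ≤ (k:ℝ) := by exact_mod_cast hk1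
    have hknR : (k:ℝ) ≤ (n:ℝ) := by exact_mod_cast le_of_lt hk.2
    have hcast : ((n-k:ℕ):ℝ) = (n:ℝ) - k := by
      rw [Nat.cast_sub (le_of_lt hk.2)]
    have hk0' : (k:ℝ) ≠ 0 := ne_of_gt hk0
    have key : W k - (n:ℝ) ≤ ((n - k:ℕ):ℝ)^2/k := by
      rw [hW]
      simp only []
      rw [hcast, ← sub_nonneg]
      have expand : ((n:ℝ)-k)^2/k - (((n:ℝ)-k) * (((n:ℝ)-1)/k) - (n:ℝ))
          = (((n:ℝ)-k)^2 - ((n:ℝ)-k)*((n:ℝ)-1) + (n:ℝ)*k)/k := by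
        field_simp
        ring
      rw [expand]
      apply div_nonneg _ (le_of_lt hk0)
      nlinarith [hk1R, hknR]
    linarith
  set H := ∑ k ∈ Icc 1 K, 1/(k:ℝ) with hHdef
  have hS1 : (∑ k ∈ Icc 1 K, W k) + (ε^2*(n:ℝ)^2*H - 3*(n:ℝ)*K) ≤ ∑ k ∈ Icc 1 K, T k := by
    have h1 := Finset.sum_le_sum hL1
    rw [Finset.sum_add_distrib, Finset.sum_sub_distrib, ← Finset.mul_sum, Finset.sum_const,
      Nat.card_Icc] at h1
    simp only [Nat.add_sub_cancel, nsmul_eq_mul] at h1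
    rw [hHdef]
    linarith [h1]
  have hS2 : (∑ k ∈ Ico (K+1) n, W k) - (n:ℝ)*((n - (K+1) : ℕ):ℝ) ≤ ∑ k ∈ Ico (K+1) n, T k := by
    have h1 := Finset.sum_le_sum hL2
    rw [Finset.sum_sub_distrib, Finset.sum_const, Nat.card_Ico, nsmul_eq_mul] at h1
    linarith [h1]
  have hub2 : ∑ k ∈ Ico 1 n, T k ≤ ∑ k ∈ Ico 1 n, W k := hub
  rw [hsplit T, hsplit W] at hub2
  -- final numeric contradiction
  have hfin : ε^2*(n:ℝ)^2*H ≤ 3*(n:ℝ)*K + (n:ℝ)*((n - (K+1) : ℕ):ℝ) := by linarith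
  have hε2n2 : (0:ℝ) < ε^2*(n:ℝ)^2 := by positivity
  have hl1 : 2*(n:ℝ)^2 < ε^2*(n:ℝ)^2*H := by
    have h2 : (2/ε^2)*(ε^2*(n:ℝ)^2) < H*(ε^2*(n:ℝ)^2) := mul_lt_mul_of_pos_right hH hε2n2
    have h3 : (2/ε^2)*(ε^2*(n:ℝ)^2) = 2*(n:ℝ)^2 := by
      field_simp
    linarith [h2]
  have hl2 : 3*(n:ℝ)*K ≤ (3/4)*(n:ℝ)^2 := by
    have h2 : 3*(n:ℝ)*(K:ℝ) ≤ 3*(n:ℝ)*(ε*(n:ℝ)/4) := by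
      apply mul_le_mul_of_nonneg_left hKε
      positivity
    have h3 : ε*(n:ℝ)^2 ≤ (n:ℝ)^2 := by nlinarith
    nlinarith
  have hl3 : (n:ℝ)*((n - (K+1) : ℕ):ℝ) ≤ (n:ℝ)^2 := by
    have h2 : ((n - (K+1) : ℕ):ℝ) ≤ (n:ℝ) := by exact_mod_cast Nat.sub_le n (K+1)
    nlinarith
  have hn2 : (0:ℝ) < (n:ℝ)^2 := by positivity
  linarith

end NeedleAux

open Filter in
/-- For each `n ≥ 3` let `x^{(n)}` be the configuration of `n` charges at equilibrium
on `[0,1]`, and let `F_n(t) = (1/n)·card{i : x^{(n)}_i ≤ t}` be its distribution function.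
Then `(F_n)` converges uniformly on `[0,1]` to the distribution function `G(t) = t` of the
uniform density; in particular `F_n(t) → t` for every `t ∈ [0,1]`. -/
theorem needleEquilibrium_cdf_tendsto_uniform (x : (n : ℕ) → Fin n → ℝ)
    (hx : ∀ n, 3 ≤ n → needleEquilibrium n (x n)) :
    TendstoUniformlyOn
      (fun (n : ℕ) (t : ℝ) =>
        ((Finset.univ.filter fun i : Fin n => x n i ≤ t).card : ℝ) / n)
      (fun t => t) atTop (Set.Icc 0 1) ∧
      ∀ t ∈ Set.Icc (0 : ℝ) 1,
        Tendsto (fun n : ℕ =>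
            ((Finset.univ.filter fun i : Fin n => x n i ≤ t).card : ℝ) / n)
          atTop (nhds t) := by
  classical
  open Finset in
  have main : TendstoUniformlyOn
      (fun (n : ℕ) (t : ℝ) =>
        ((Finset.univ.filter fun i : Fin n => x n i ≤ t).card : ℝ) / n)
      (fun t => t) atTop (Set.Icc 0 1) := by
    rw [Metric.tendstoUniformlyOn_iff]
    intro ε hε
    set ε₀ := min ε 1 with hε₀def
    have hε₀0 : 0 < ε₀ := lt_min hε one_pos
    have hε₀1 : ε₀ ≤ 1 := min_le_right _ _
    have hε₀ε : ε₀ ≤ ε := min_le_left _ _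
    have hharm : Tendsto (fun K : ℕ => ∑ k ∈ Icc 1 K, 1/(k:ℝ)) atTop atTop := by
      have e : ∀ K : ℕ, ∑ i ∈ range K, 1/((i:ℝ)+1) = ∑ k ∈ Icc 1 K, 1/(k:ℝ) := by
        intro K
        rw [← Finset.Ico_add_one_right_eq_Icc, Finset.sum_Ico_eq_sum_range]
        refine Finset.sum_congr rfl fun i _ => ?_
        push_cast
        rw [add_comm]
      exact Real.tendsto_sum_range_one_div_nat_succ_atTop.congr e
    have hlin : Tendsto (fun n : ℕ => ε₀*(n:ℝ)/4) atTop atTop := by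
      apply Tendsto.atTop_div_const (by norm_num : (0:ℝ) < 4)
      exact (tendsto_natCast_atTop_atTop (R := ℝ)).const_mul_atTop hε₀0
    have hKt : Tendsto (fun n : ℕ => ⌊ε₀*(n:ℝ)/4⌋₊) atTop atTop :=
      tendsto_nat_floor_atTop.comp hlin
    have hev1 : ∀ᶠ n : ℕ in atTop, 2/ε₀^2 < ∑ k ∈ Icc 1 ⌊ε₀*(n:ℝ)/4⌋₊, 1/(k:ℝ) :=
      (hharm.comp hKt).eventually_gt_atTop _
    have hev2 : ∀ᶠ n : ℕ in atTop, (2:ℝ) ≤ ε₀*(n:ℝ)/4 := hlin.eventually_ge_atTop 2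
    have hev3 : ∀ᶠ n : ℕ in atTop, 3 ≤ n := eventually_ge_atTop 3
    filter_upwards [hev1, hev2, hev3] with n h1 h2 h3
    intro t ht
    obtain ⟨X, hmono, hX0, hXl, hbal, hcard⟩ := needle_convert h3 (hx n h3)
    rw [Real.dist_eq, abs_sub_comm, hcard t]
    set K := ⌊ε₀*(n:ℝ)/4⌋₊ with hK
    have hn0 : (0:ℝ) < n := by
      have : (3:ℝ) ≤ (n:ℝ) := by exact_mod_cast h3
      linarith
    have hK1 : 1 ≤ K := Nat.le_floor (by exact_mod_cast le_trans (by norm_num) h2)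
    have hKε : (K:ℝ) ≤ ε₀*n/4 := Nat.floor_le (by positivity)
    have hKn : K + 1 ≤ n := by
      have h4 : ε₀*(n:ℝ) ≤ (n:ℝ) := by nlinarith
      have h5 : (K:ℝ) < n := by
        apply lt_of_le_of_lt hKε
        linarith
      have h6 : K < n := by exact_mod_cast h5
      omega
    rcases eq_or_lt_of_le ht.1 with h0 | h0
    · -- t = 0
      have hset : ((range n).filter (fun i => X i ≤ t)) = {0} := by
        ext i
        rw [mem_filter, mem_range, mem_singleton]
        constructor
        · rintro ⟨hin, hXi⟩
          by_contra hne
          have h7 := hmono 0 i (by omega) hin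
          rw [hX0] at h7
          rw [← h0] at hXi
          linarith
        · rintro rfl
          exact ⟨by omega, by rw [hX0, ← h0]⟩
      rw [hset]
      simp only [card_singleton, Nat.cast_one]
      rw [← h0, sub_zero, abs_of_nonneg (by positivity)]
      have h8 : 1/(n:ℝ) ≤ ε₀/8 := by
        rw [div_le_div_iff₀ hn0 (by norm_num)]
        linarith
      calc (1:ℝ)/n ≤ ε₀/8 := h8
        _ < ε₀ := by linarith
        _ ≤ ε := hε₀ε
    rcases eq_or_lt_of_le ht.2 with h1' | h1'
    · -- t = 1
      have hset : ((range n).filter (fun i => X i ≤ t)) = range n := by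
        refine Finset.filter_true_of_mem (fun i hi => ?_)
        rw [mem_range] at hi
        rw [h1']
        rcases Nat.lt_or_ge i (n-1) with h | h
        · have := hmono i (n-1) h (by omega)
          rw [hXl] at this
          linarith
        · have : i = n - 1 := by omega
          rw [this, hXl]
      rw [hset, card_range, div_self (ne_of_gt hn0), h1']
      simpa using hε
    · -- 0 < t < 1
      have := needle_main h3 hmono hX0 hXl hbal hε₀0 hε₀1 h0 h1' hK1 hKε hKn h1
      exact lt_of_lt_of_le this hε₀ε
  exact ⟨main, fun t ht => main.tendsto_at ht⟩
end

section
/- Along the first-order dynamics the interaction energy decreases: let n ≥ 4 and let x : [0,∞) → ℝⁿ be such that x_1(t) = 0 and x_n(t) = 1 for all t, x_1(t) < x_2(t) < ⋯ < x_n(t) for all t, each x_i (2 ≤ i ≤ n−1) is differentiable, and for all t ≥ 0 and 2 ≤ i ≤ n−1, x_i′(t) = ∑_{j=1}^{i−1} 1/(x_i(t) − x_j(t))² − ∑_{j=i+1}^{n} 1/(x_i(t) − x_j(t))². Then the function t ↦ ∑_{1 ≤ j < k ≤ n} 1/(x_k(t) − x_j(t)) is nonincreasing on [0,∞). -/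
/-- Along the first-order dynamics the interaction energy decreases: if `x_1 ≡ 0`,
`x_n ≡ 1`, the coordinates stay strictly increasing, and every interior coordinate
satisfies `x_i' = ∑_{j<i} 1/(x_i - x_j)² − ∑_{j>i} 1/(x_i - x_j)²` on `[0,∞)`, then
`t ↦ ∑_{j<k} 1/(x_k(t) - x_j(t))` is nonincreasing on `[0,∞)`. -/
theorem energy_antitone_along_first_order_flow (n : ℕ) (hn : 4 ≤ n)
    (x : ℝ → Fin n → ℝ)
    (h0 : ∀ t ∈ Set.Ici (0 : ℝ), ∀ i : Fin n, i.val = 0 → x t i = 0)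
    (h1 : ∀ t ∈ Set.Ici (0 : ℝ), ∀ i : Fin n, i.val = n - 1 → x t i = 1)
    (hmono : ∀ t ∈ Set.Ici (0 : ℝ), StrictMono (x t))
    (hode : ∀ t ∈ Set.Ici (0 : ℝ), ∀ i : Fin n, 1 ≤ i.val → i.val ≤ n - 2 →
      HasDerivWithinAt (fun s => x s i)
        ((∑ j ∈ Finset.univ.filter (fun j => j < i), 1 / (x t i - x t j) ^ 2) -
          ∑ j ∈ Finset.univ.filter (fun j => i < j), 1 / (x t i - x t j) ^ 2)
        (Set.Ici 0) t) :
    AntitoneOn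
      (fun t => ∑ p ∈ Finset.univ.filter (fun p : Fin n × Fin n => p.1 < p.2),
        1 / (x t p.2 - x t p.1))
      (Set.Ici 0) := by
  classical
  set E : ℝ → ℝ := fun t => ∑ p ∈ Finset.univ.filter (fun p : Fin n × Fin n => p.1 < p.2),
        1 / (x t p.2 - x t p.1) with hE
  have key : ∀ t ∈ Set.Ici (0 : ℝ), ∃ d : ℝ, d ≤ 0 ∧
      HasDerivWithinAt E d (Set.Ici 0) t := by
    intro t ht
    set v : Fin n → ℝ := fun i => if 1 ≤ i.val ∧ i.val ≤ n - 2 then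
        (∑ j ∈ Finset.univ.filter (fun j => j < i), 1 / (x t i - x t j) ^ 2) -
          ∑ j ∈ Finset.univ.filter (fun j => i < j), 1 / (x t i - x t j) ^ 2 else 0 with hvdef
    have hd : ∀ i : Fin n, HasDerivWithinAt (fun s => x s i) (v i) (Set.Ici 0) t := by
      intro i
      by_cases hi : 1 ≤ i.val ∧ i.val ≤ n - 2
      · simpa [hvdef, hi] using hode t ht i hi.1 hi.2
      · have hv0 : v i = 0 := by simp [hvdef, hi]
        rw [hv0]
        have hb : i.val = 0 ∨ i.val = n - 1 := by
          have := i.isLt; omega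
        rcases hb with hb | hb
        · exact (hasDerivWithinAt_const t _ (0 : ℝ)).congr
            (fun s hs => h0 s hs i hb) (h0 t ht i hb)
        · exact (hasDerivWithinAt_const t _ (1 : ℝ)).congr
            (fun s hs => h1 s hs i hb) (h1 t ht i hb)
    have hlt : ∀ j k : Fin n, j < k → x t j < x t k := fun j k h => hmono t ht h
    have hne : ∀ p : Fin n × Fin n, p.1 < p.2 → x t p.2 - x t p.1 ≠ 0 := by
      intro p hp
      exact sub_ne_zero.mpr (ne_of_gt (hlt _ _ hp))
    set a : Fin n → Fin n → ℝ := fun j k => ((x t k - x t j) ^ 2)⁻¹ with hadef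
    refine ⟨∑ p ∈ Finset.univ.filter (fun p : Fin n × Fin n => p.1 < p.2),
        -(v p.2 - v p.1) / (x t p.2 - x t p.1) ^ 2, ?_, ?_⟩
    · -- nonpositivity of the derivative
      have hre : ∑ p ∈ Finset.univ.filter (fun p : Fin n × Fin n => p.1 < p.2),
            (v p.2 - v p.1) * a p.1 p.2
          = ∑ i : Fin n, v i * ((∑ j ∈ Finset.univ.filter (fun j => j < i), a j i) -
              ∑ k ∈ Finset.univ.filter (fun k => i < k), a i k) := by
        rw [Finset.sum_filter, Fintype.sum_prod_type]
        have step : ∀ j k : Fin n,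
            (if j < k then (v k - v j) * a j k else 0)
              = (if j < k then v k * a j k else 0) - (if j < k then v j * a j k else 0) := by
          intro j k; split_ifs <;> ring
        simp_rw [step, mul_sub, Finset.mul_sum, Finset.sum_filter]
        simp_rw [Finset.sum_sub_distrib]
        congr 1
        exact Finset.sum_comm
      have hterm : ∀ i : Fin n,
          0 ≤ v i * ((∑ j ∈ Finset.univ.filter (fun j => j < i), a j i) -
              ∑ k ∈ Finset.univ.filter (fun k => i < k), a i k) := by
        intro i
        by_cases hi : 1 ≤ i.val ∧ i.val ≤ n - 2
        · have hvi : v i = (∑ j ∈ Finset.univ.filter (fun j => j < i), a j i) -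
              ∑ k ∈ Finset.univ.filter (fun k => i < k), a i k := by
            simp only [hvdef]
            rw [if_pos hi]
            congr 1
            · exact Finset.sum_congr rfl fun j _ => by simp only [hadef, one_div]
            · exact Finset.sum_congr rfl fun k _ => by
                simp only [hadef, one_div]
                rw [show (x t k - x t i) ^ 2 = (x t i - x t k) ^ 2 by ring]
          rw [← hvi]
          exact mul_self_nonneg _
        · have hv0 : v i = 0 := by simp [hvdef, hi]
          rw [hv0, zero_mul]
      have hS : 0 ≤ ∑ p ∈ Finset.univ.filter (fun p : Fin n × Fin n => p.1 < p.2),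
          (v p.2 - v p.1) * a p.1 p.2 := by
        rw [hre]
        exact Finset.sum_nonneg fun i _ => hterm i
      have heq : ∑ p ∈ Finset.univ.filter (fun p : Fin n × Fin n => p.1 < p.2),
            -(v p.2 - v p.1) / (x t p.2 - x t p.1) ^ 2
          = -∑ p ∈ Finset.univ.filter (fun p : Fin n × Fin n => p.1 < p.2),
            (v p.2 - v p.1) * a p.1 p.2 := by
        rw [← Finset.sum_neg_distrib]
        exact Finset.sum_congr rfl fun p _ => by
          simp only [hadef]
          rw [neg_div, div_eq_mul_inv]
      rw [heq]
      linarith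
    · -- the derivative computation
      rw [hE]
      simp only [one_div]
      apply HasDerivWithinAt.fun_sum
      intro p hp
      have hp' : p.1 < p.2 := (Finset.mem_filter.mp hp).2
      exact ((hd p.2).sub (hd p.1)).inv (hne p hp')
  have hC : ContinuousOn E (Set.Ici 0) := fun t ht =>
    ((key t ht).choose_spec.2).continuousWithinAt
  have hdiff : DifferentiableOn ℝ E (interior (Set.Ici (0 : ℝ))) := by
    intro t ht
    rw [interior_Ici] at ht
    have ht' : t ∈ Set.Ici (0 : ℝ) := Set.mem_Ici.mpr (le_of_lt (Set.mem_Ioi.mp ht))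
    have hmem : Set.Ici (0 : ℝ) ∈ nhds t := by
      rw [← interior_Ici] at ht
      exact mem_interior_iff_mem_nhds.mp ht
    exact (((key t ht').choose_spec.2).hasDerivAt hmem).differentiableAt.differentiableWithinAt
  have hder : ∀ t ∈ interior (Set.Ici (0 : ℝ)), deriv E t ≤ 0 := by
    intro t ht
    have hmem : Set.Ici (0 : ℝ) ∈ nhds t := mem_interior_iff_mem_nhds.mp ht
    have ht' : t ∈ Set.Ici (0 : ℝ) := interior_subset ht
    obtain ⟨d, hd0, hdd⟩ := key t ht'
    rw [(hdd.hasDerivAt hmem).deriv]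
    exact hd0
  exact antitoneOn_of_deriv_nonpos (convex_Ici 0) hC hdiff hder
end

section
/- Let s ≥ 1 be an integer and q an integer with 0 < q < 2^s, and set x = q/2^s. Then the normalized one-sided force on the charge at x under the uniform discrete arrangement tends to infinity: the sequence n ↦ (1/(2^n + 1)) · ∑_{k=0}^{q·2^{n−s} − 1} 1/(x − k/2^n)², defined for n ≥ s, tends to +∞ as n → ∞. -/
open Filter

/-- Let `s ≥ 1`, `0 < q < 2^s`, `x = q/2^s`. Under the uniform discrete arrangement of
`2^n + 1` charges at the points `k/2^n` (`k = 0, …, 2^n`), each of charge `1/(2^n+1)`,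
the normalized one-sided force on the charge at `x`,
`(1/(2^n+1)) · ∑_{k=0}^{q·2^{n-s}-1} 1/(x - k/2^n)²`, tends to `+∞` as `n → ∞`. -/
theorem one_sided_force_tendsto_atTop (s q : ℕ) (hs : 1 ≤ s) (hq0 : 0 < q)
    (hq : q < 2 ^ s) :
    Tendsto (fun n : ℕ =>
        (1 / ((2 : ℝ) ^ n + 1)) *
          ∑ k ∈ Finset.range (q * 2 ^ (n - s)),
            1 / ((q : ℝ) / 2 ^ s - (k : ℝ) / 2 ^ n) ^ 2)
      atTop atTop := by
  have h2 : Tendsto (fun n : ℕ => (2 : ℝ) ^ n / 2) atTop atTop :=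
    (tendsto_pow_atTop_atTop_of_one_lt (by norm_num : (1:ℝ) < 2)).atTop_div_const
      (by norm_num)
  refine tendsto_atTop_mono' atTop ?_ h2
  filter_upwards [eventually_ge_atTop s] with n hn
  set N : ℕ := q * 2 ^ (n - s) with hNdef
  have hN1 : 1 ≤ N := Nat.one_le_iff_ne_zero.2 (by positivity)
  have hpow : (2 : ℝ) ^ n = 2 ^ (n - s) * 2 ^ s := by
    rw [← pow_add, Nat.sub_add_cancel hn]
  -- value of the closest term
  have hterm : (q : ℝ) / 2 ^ s - ((N - 1 : ℕ) : ℝ) / 2 ^ n = 1 / 2 ^ n := by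
    have : ((N - 1 : ℕ) : ℝ) = (q : ℝ) * 2 ^ (n - s) - 1 := by
      push_cast [Nat.cast_sub hN1]; simp [hNdef]
    rw [this, hpow]
    have hs0 : (2 : ℝ) ^ s ≠ 0 := by positivity
    have hns0 : (2 : ℝ) ^ (n - s) ≠ 0 := by positivity
    field_simp
    ring
  have hsum_ge : ((2 : ℝ) ^ n) ^ 2 ≤
      ∑ k ∈ Finset.range N, 1 / ((q : ℝ) / 2 ^ s - (k : ℝ) / 2 ^ n) ^ 2 := by
    have hmem : N - 1 ∈ Finset.range N := Finset.mem_range.2 (by omega)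
    have := Finset.single_le_sum (s := Finset.range N)
      (f := fun k : ℕ => 1 / ((q : ℝ) / 2 ^ s - (k : ℝ) / 2 ^ n) ^ 2)
      (fun i _ => by positivity) hmem
    calc ((2 : ℝ) ^ n) ^ 2 = 1 / ((q : ℝ) / 2 ^ s - ((N - 1 : ℕ) : ℝ) / 2 ^ n) ^ 2 := by
          rw [hterm]
          rw [div_pow, one_pow, one_div_one_div]
      _ ≤ _ := this
  have hpos : (0 : ℝ) < 2 ^ n + 1 := by positivity
  calc (2 : ℝ) ^ n / 2 ≤ ((2 : ℝ) ^ n) ^ 2 / (2 ^ n + 1) := by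
        rw [div_le_div_iff₀ (by norm_num) hpos]
        have h1 : (1 : ℝ) ≤ 2 ^ n := one_le_pow₀ (by norm_num)
        nlinarith
    _ = (1 / ((2 : ℝ) ^ n + 1)) * ((2 : ℝ) ^ n) ^ 2 := by ring
    _ ≤ _ := by
        apply mul_le_mul_of_nonneg_left hsum_ge
        positivity
end

section
/- Let s ≥ 1 be an integer and q an integer with 0 < q < 2^s, and set x = q/2^s. Then the normalized total field at x under the uniform discrete arrangement converges to the continuous uniform field: as n → ∞, (1/(2^n + 1)) · ( ∑_{k=q·2^{n−s}+1}^{2^n} 1/(k/2^n − x)² − ∑_{k=0}^{q·2^{n−s}−1} 1/(x − k/2^n)² ) converges to 1/x − 1/(1−x), which equals (2x−1)/(x(x−1)). -/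
open Filter

open Finset in
noncomputable def h2 (N : ℕ) : ℝ := ∑ j ∈ Finset.range N, 1 / ((j : ℝ) + 1) ^ 2


lemma h2_bounds {M N : ℕ} (hM : 1 ≤ M) (hMN : M ≤ N) :
    1 / ((M:ℝ) + 1) - 1 / ((N:ℝ) + 1) ≤ h2 N - h2 M ∧
      h2 N - h2 M ≤ 1 / (M : ℝ) - 1 / (N : ℝ) := by
  induction N, hMN using Nat.le_induction with
  | base => simp
  | succ n hn ih =>
    have hn1 : (1:ℝ) ≤ (n:ℝ) := by exact_mod_cast hM.trans hn
    have hstep : h2 (n+1) - h2 n = 1 / ((n:ℝ)+1)^2 := by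
      simp [h2, Finset.sum_range_succ]
    have key1 : 1/((n:ℝ)+1) - 1/((n:ℝ)+1+1) ≤ 1/((n:ℝ)+1)^2 := by
      rw [div_sub_div _ _ (by positivity) (by positivity),
        div_le_div_iff₀ (by positivity) (by positivity)]
      nlinarith
    have key2 : 1/((n:ℝ)+1)^2 ≤ 1/(n:ℝ) - 1/((n:ℝ)+1) := by
      rw [div_sub_div _ _ (by positivity) (by positivity),
        div_le_div_iff₀ (by positivity) (by positivity)]
      nlinarith
    obtain ⟨ih1, ih2⟩ := ih
    push_cast
    constructor <;> linarith

lemma h2_est {M N : ℕ} (hM : 1 ≤ M) (hN : 1 ≤ N) :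
    |h2 N - h2 M - (1 / (M:ℝ) - 1 / (N:ℝ))| ≤ 1 / (M:ℝ)^2 + 1 / (N:ℝ)^2 := by
  have key : ∀ A B : ℕ, 1 ≤ A → A ≤ B →
      |h2 B - h2 A - (1 / (A:ℝ) - 1 / (B:ℝ))| ≤ 1 / (A:ℝ)^2 + 1 / (B:ℝ)^2 := by
    intro A B hA hAB
    obtain ⟨hl, hu⟩ := h2_bounds hA hAB
    have hA1 : (1:ℝ) ≤ (A:ℝ) := by exact_mod_cast hA
    have hB1 : (1:ℝ) ≤ (B:ℝ) := by exact_mod_cast hA.trans hAB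
    have f1 : 1/((B:ℝ)+1) ≤ 1/(B:ℝ) :=
      one_div_le_one_div_of_le (by linarith) (by linarith)
    have f2 : 1/(A:ℝ) - 1/((A:ℝ)+1) ≤ 1/(A:ℝ)^2 := by
      rw [div_sub_div _ _ (by positivity) (by positivity),
        div_le_div_iff₀ (by positivity) (by positivity)]
      nlinarith
    have f3 : (0:ℝ) ≤ 1/(A:ℝ)^2 := by positivity
    have f4 : (0:ℝ) ≤ 1/(B:ℝ)^2 := by positivity
    rw [abs_le]
    constructor <;> linarith
  rcases le_total M N with h | h
  · exact key M N hM h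
  · have heq : h2 N - h2 M - (1/(M:ℝ) - 1/(N:ℝ))
        = -(h2 M - h2 N - (1/(N:ℝ) - 1/(M:ℝ))) := by ring
    rw [heq, abs_neg]
    linarith [key N M hN h]


lemma aux_term {n : ℕ} (z : ℝ) (hz : z ≠ 0) :
    1 / (z / (2:ℝ)^n)^2 = 4^n * (1/z^2) := by
  have h4 : (4:ℝ)^n = 2^n * 2^n := by rw [← mul_pow]; norm_num
  have h2n : ((2:ℝ)^n) ≠ 0 := by positivity
  rw [h4]
  field_simp

lemma sum_right {n m : ℕ} {y : ℝ} (hm : (m:ℝ) = y * 2^n) :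
    ∑ k ∈ Finset.Icc (m+1) (2^n), 1/((k:ℝ)/2^n - y)^2 = 4^n * h2 (2^n - m) := by
  rw [← Finset.Ico_add_one_right_eq_Icc, Finset.sum_Ico_eq_sum_range]
  have he : 2^n + 1 - (m+1) = 2^n - m := by omega
  rw [he, h2, Finset.mul_sum]
  apply Finset.sum_congr rfl
  intro i _
  have h2n : (0:ℝ) < 2^n := by positivity
  have hk : ((m+1+i : ℕ):ℝ)/2^n - y = ((i:ℝ)+1)/2^n := by
    push_cast
    rw [hm]
    field_simp
    ring
  rw [hk, aux_term _ (by positivity)]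

lemma sum_left {n m : ℕ} {y : ℝ} (hm : (m:ℝ) = y * 2^n) :
    ∑ k ∈ Finset.range m, 1/(y - (k:ℝ)/2^n)^2 = 4^n * h2 m := by
  rw [← Finset.sum_range_reflect, h2, Finset.mul_sum]
  apply Finset.sum_congr rfl
  intro j hj
  have hj' : j < m := Finset.mem_range.mp hj
  have h2n : (0:ℝ) < 2^n := by positivity
  have hcast : ((m - 1 - j : ℕ):ℝ) = (m:ℝ) - 1 - j := by
    rw [Nat.cast_sub (by omega), Nat.cast_sub (by omega)]
    push_cast; ring
  have hk : y - ((m - 1 - j : ℕ):ℝ)/2^n = ((j:ℝ)+1)/2^n := by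
    rw [hcast, hm]
    field_simp
    ring
  rw [hk, aux_term _ (by positivity)]

/-- Let `s ≥ 1`, `0 < q < 2^s`, `x = q/2^s`. Under the uniform discrete arrangement of
`2^n + 1` charges at the points `k/2^n` (`k = 0, …, 2^n`), each of charge `1/(2^n+1)`,
the normalized total field at `x`,
`(1/(2^n+1))·(∑_{k=q·2^{n-s}+1}^{2^n} 1/(k/2^n - x)² − ∑_{k=0}^{q·2^{n-s}-1} 1/(x - k/2^n)²)`,
converges to `1/x − 1/(1-x)`, which equals `(2x-1)/(x(x-1))`. -/
theorem total_field_tendsto_uniform_field (s q : ℕ) (hs : 1 ≤ s) (hq0 : 0 < q)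
    (hq : q < 2 ^ s) :
    Tendsto (fun n : ℕ =>
        (1 / ((2 : ℝ) ^ n + 1)) *
          ((∑ k ∈ Finset.Icc (q * 2 ^ (n - s) + 1) (2 ^ n),
              1 / ((k : ℝ) / 2 ^ n - (q : ℝ) / 2 ^ s) ^ 2) -
            ∑ k ∈ Finset.range (q * 2 ^ (n - s)),
              1 / ((q : ℝ) / 2 ^ s - (k : ℝ) / 2 ^ n) ^ 2))
      atTop (nhds (1 / ((q : ℝ) / 2 ^ s) - 1 / (1 - (q : ℝ) / 2 ^ s))) ∧
    1 / ((q : ℝ) / 2 ^ s) - 1 / (1 - (q : ℝ) / 2 ^ s) =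
      (2 * ((q : ℝ) / 2 ^ s) - 1) / (((q : ℝ) / 2 ^ s) * ((q : ℝ) / 2 ^ s - 1)) := by
  have h2s : (0:ℝ) < 2^s := by positivity
  set y : ℝ := (q:ℝ)/2^s with hy
  have hy0 : 0 < y := div_pos (by exact_mod_cast hq0) h2s
  have hy1 : y < 1 := by
    rw [hy, div_lt_one h2s]; exact_mod_cast hq
  have hyne : y ≠ 0 := ne_of_gt hy0
  have hyne1 : (1:ℝ) - y ≠ 0 := by linarith
  constructor
  · set L : ℝ := 1/y - 1/(1-y) with hL
    have ht : Tendsto (fun n : ℕ => ((2:ℝ)^n + 1)⁻¹) atTop (nhds 0) := by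
      apply Tendsto.inv_tendsto_atTop
      apply tendsto_atTop_add_const_right
      exact tendsto_pow_atTop_atTop_of_one_lt (by norm_num)
    set C : ℝ := 1/y^2 + 1/(1-y)^2 with hC
    set G : ℕ → ℝ := fun n =>
      ((4:ℝ)^n/((2:ℝ)^n+1)) * (h2 (2^n - q*2^(n-s)) - h2 (q*2^(n-s))) with hGdef
    set A : ℕ → ℝ := fun n => ((2:ℝ)^n/((2:ℝ)^n+1)) * L with hAdef
    have hAt : Tendsto A atTop (nhds L) := by
      have hfun : A = fun n : ℕ => L - L * ((2:ℝ)^n+1)⁻¹ := by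
        funext n
        have hne : ((2:ℝ)^n+1) ≠ 0 := by positivity
        simp only [hAdef]
        field_simp
        ring
      rw [hfun]
      have h' := (tendsto_const_nhds (x := L) (f := atTop)).sub (ht.const_mul L)
      simpa using h'
    -- facts for n ≥ s
    have keyM : ∀ n : ℕ, s ≤ n → ((q*2^(n-s) : ℕ):ℝ) = y * 2^n := by
      intro n hn
      have hpow : (2:ℝ)^s * 2^(n-s) = 2^n := by
        rw [← pow_add]; congr 1; omega
      push_cast
      rw [hy]
      field_simp
      linear_combination hpow
    have keymn : ∀ n : ℕ, s ≤ n → q*2^(n-s) + 1 ≤ 2^n := by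
      intro n hn
      have hpow : 2^s * 2^(n-s) = 2^n := by rw [← pow_add]; congr 1; omega
      have h1 : (q+1) * 2^(n-s) ≤ 2^s * 2^(n-s) := Nat.mul_le_mul_right _ hq
      have hp : 1 ≤ 2^(n-s) := Nat.one_le_two_pow
      calc q*2^(n-s) + 1 ≤ q*2^(n-s) + 2^(n-s) := by omega
        _ = (q+1)*2^(n-s) := by ring
        _ ≤ 2^s * 2^(n-s) := h1
        _ = 2^n := hpow
    have keyN : ∀ n : ℕ, s ≤ n → ((2^n - q*2^(n-s) : ℕ):ℝ) = (1-y) * 2^n := by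
      intro n hn
      rw [Nat.cast_sub (by have := keymn n hn; omega), keyM n hn]
      push_cast
      ring
    -- E bound
    have hbound : ∀ᶠ n in atTop, ‖G n - A n‖ ≤ C * ((2:ℝ)^n + 1)⁻¹ := by
      filter_upwards [eventually_ge_atTop s] with n hn
      have hM := keyM n hn
      have hN := keyN n hn
      have hmn := keymn n hn
      have hm1 : 1 ≤ q*2^(n-s) := Nat.one_le_iff_ne_zero.mpr (by positivity)
      have hN1 : 1 ≤ 2^n - q*2^(n-s) := by omega
      have h4 : (4:ℝ)^n = 2^n * 2^n := by rw [← mul_pow]; norm_num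
      have h2n : (0:ℝ) < 2^n := by positivity
      have hden : (0:ℝ) < (2:ℝ)^n + 1 := by positivity
      have hAeq : A n = ((4:ℝ)^n/((2:ℝ)^n+1)) *
          (1/((q*2^(n-s) : ℕ):ℝ) - 1/((2^n - q*2^(n-s) : ℕ):ℝ)) := by
        rw [hM, hN]
        simp only [hAdef, hL, h4]
        field_simp
      have est := h2_est hm1 hN1
      calc ‖G n - A n‖
          = ((4:ℝ)^n/((2:ℝ)^n+1)) *
            |h2 (2^n - q*2^(n-s)) - h2 (q*2^(n-s)) -
              (1/((q*2^(n-s) : ℕ):ℝ) - 1/((2^n - q*2^(n-s) : ℕ):ℝ))| := by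
            rw [hAeq]
            simp only [hGdef]
            rw [← mul_sub, Real.norm_eq_abs, abs_mul,
              abs_of_pos (by positivity : (0:ℝ) < (4:ℝ)^n/((2:ℝ)^n+1))]
        _ ≤ ((4:ℝ)^n/((2:ℝ)^n+1)) *
            (1/((q*2^(n-s) : ℕ):ℝ)^2 + 1/((2^n - q*2^(n-s) : ℕ):ℝ)^2) := by
            apply mul_le_mul_of_nonneg_left est (by positivity)
        _ = C * ((2:ℝ)^n + 1)⁻¹ := by
            rw [hM, hN]
            simp only [hC, h4]
            field_simp
    have hE : Tendsto (fun n => G n - A n) atTop (nhds 0) :=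
      squeeze_zero_norm' hbound (by simpa using ht.const_mul C)
    have hGt : Tendsto G atTop (nhds L) := by
      have h' := hAt.add hE
      rw [add_zero] at h'
      exact h'.congr (fun n => by ring)
    refine hGt.congr' ?_
    filter_upwards [eventually_ge_atTop s] with n hn
    rw [sum_right (keyM n hn), sum_left (keyM n hn)]
    simp only [hGdef]
    ring
  · have key : ∀ x : ℝ, x ≠ 0 → x ≠ 1 → 1/x - 1/(1-x) = (2*x-1)/(x*(x-1)) := by
      intro x h0 h1
      have h2 : 1 - x ≠ 0 := fun h => h1 (by linarith)
      have h3 : x - 1 ≠ 0 := fun h => h1 (by linarith)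
      field_simp
      ring
    exact key y hyne (by linarith)
end
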